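/- arXiv:1609.05140 — 7 statements merged into one kernel-verified Lean document; each statement's English description precedes it below -/
import Mathlib

section
/- Intra-Option Policy Gradient Theorem: Fix θ ∈ ℝ^d and assume for every option ω, state s and action a the map θ ↦ π_{ω,θ}(a|s) is differentiable at θ. Then for every initial state-option pair (s₀, ω₀), the map θ ↦ Q_Ω^θ(s₀, ω₀) is differentiable and its gradient equals ∑_{s,ω} μ_Ω(s, ω | s₀, ω₀) ∑_a (∂π_{ω,θ}(a|s)/∂θ) · Q_U^θ(s, ω, a), where μ_Ω(s, ω | s₀, ω₀) = ∑_{k=0}^∞ P_γ^{(k)}(s, ω | s₀, ω₀) is the discounted weighting of state-option pairs along trajectories from (s₀, ω₀). -/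
open Matrix

attribute [local instance]
  Matrix.linftyOpNormedAddCommGroup Matrix.linftyOpNormedRing
  Matrix.linftyOpNormedAlgebra Matrix.linftyOpNormedSpace

section IOPGAux

set_option linter.unusedSectionVars false

variable {S A O : Type*} [Fintype S] [Fintype A] [Fintype O]
  [DecidableEq S] [DecidableEq O]

/-- elementary weight -/
def iopgW (P : S → A → S → ℝ) (γ : ℝ) (β : O → S → ℝ) (πΩ : S → O → ℝ)
    (x z : S × O) (a : A) : ℝ :=
  (γ * P x.1 a z.1) *
    ((1 - β x.2 z.1) * (if z.2 = x.2 then 1 else 0) + β x.2 z.1 * πΩ z.1 z.2)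

/-- generalized one-step kernel with weights `c` -/
def iopgKer (P : S → A → S → ℝ) (γ : ℝ) (β : O → S → ℝ) (πΩ : S → O → ℝ)
    (c : O → S → A → ℝ) : Matrix (S × O) (S × O) ℝ :=
  Matrix.of fun x z => ∑ a, c x.2 x.1 a * iopgW P γ β πΩ x z a

lemma iopgKer_decomp (P : S → A → S → ℝ) (γ : ℝ) (β : O → S → ℝ) (πΩ : S → O → ℝ)
    (c : O → S → A → ℝ) :
    iopgKer P γ β πΩ c = ∑ x : S × O, ∑ z : S × O, ∑ a : A,
      c x.2 x.1 a • (iopgW P γ β πΩ x z a • Matrix.single x z (1 : ℝ)) := by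
  ext i j
  simp only [Matrix.sum_apply, Matrix.smul_apply, smul_eq_mul, Matrix.single,
    Matrix.of_apply, mul_ite, mul_one, mul_zero, iopgKer]
  rw [Finset.sum_eq_single i (fun x _ hx => by
        apply Finset.sum_eq_zero; intro z _; apply Finset.sum_eq_zero; intro a _
        simp [hx]) (by simp)]
  rw [Finset.sum_comm]
  refine Finset.sum_congr rfl fun a _ => ?_
  rw [Finset.sum_eq_single j (fun z _ hz => by simp [hz]) (by simp)]
  simp

lemma iopgKer_combo (P : S → A → S → ℝ) (γ : ℝ) (β : O → S → ℝ) (πΩ : S → O → ℝ)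
    (c : O → S → A → ℝ) (q : S → O → ℝ) (uu : O → S → ℝ)
    (huu : ∀ ω s', uu ω s' =
      (1 - β ω s') * q s' ω + β ω s' * ∑ ω', πΩ s' ω' * q s' ω')
    (x : S × O) :
    ∑ z : S × O, iopgKer P γ β πΩ c x z * q z.1 z.2
      = ∑ a, c x.2 x.1 a * (γ * ∑ s', P x.1 a s' * uu x.2 s') := by
  have key : ∀ (s' : S) (a : A),
      ∑ ω' : O, iopgW P γ β πΩ x (s', ω') a * q s' ω'
        = (γ * P x.1 a s') * uu x.2 s' := by
    intro s' a
    rw [huu]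
    simp only [iopgW, mul_add, add_mul, mul_ite, ite_mul, mul_one, one_mul, mul_zero,
      zero_mul, Finset.sum_add_distrib, Finset.mul_sum, Finset.sum_ite_eq',
      Finset.mem_univ, if_true]
    ring_nf
  simp only [iopgKer, Matrix.of_apply, Finset.sum_mul]
  rw [Finset.sum_comm]
  refine Finset.sum_congr rfl fun a _ => ?_
  rw [Fintype.sum_prod_type]
  simp only [Finset.mul_sum]
  refine Finset.sum_congr rfl fun s' _ => ?_
  calc ∑ ω' : O, c x.2 x.1 a * iopgW P γ β πΩ x (s', ω') a * q s' ω'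
      = c x.2 x.1 a * ∑ ω' : O, iopgW P γ β πΩ x (s', ω') a * q s' ω' := by
        rw [Finset.mul_sum]
        exact Finset.sum_congr rfl fun _ _ => by ring
    _ = _ := by rw [key s' a]; ring

lemma iopg_matrix_norm_le {n : Type*} [Fintype n] (K : Matrix n n ℝ) {γ : ℝ} (hγ : 0 ≤ γ)
    (h0 : ∀ x z, 0 ≤ K x z) (h1 : ∀ x, ∑ z, K x z ≤ γ) : ‖K‖ ≤ γ := by
  rw [Matrix.linfty_opNorm_def]
  have : ∀ i : n, ((∑ j, ‖K i j‖₊ : NNReal) : ℝ) ≤ γ := by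
    intro i
    push_cast
    calc (∑ j, ‖K i j‖) = ∑ j, K i j := by
          refine Finset.sum_congr rfl fun j _ => ?_
          rw [Real.norm_eq_abs, abs_of_nonneg (h0 i j)]
      _ ≤ γ := h1 i
  have hsup : (Finset.univ.sup fun i => ∑ j, ‖K i j‖₊) ≤ (⟨γ, hγ⟩ : NNReal) :=
    Finset.sup_le fun i _ => by
      exact NNReal.coe_le_coe.1 (this i)
  exact NNReal.coe_le_coe.2 hsup

end IOPGAux


/-- **Intra-Option Policy Gradient Theorem.** For a finite MDP with options, if every
intra-option policy probability `π θ ω s a` is differentiable at `θ₀`, then the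
option-value function `θ ↦ Q θ s₀ ω₀` is differentiable at `θ₀` with gradient
`∑_{s,ω} μ_Ω(s,ω|s₀,ω₀) ∑_a ∂π_{ω,θ}(a|s)/∂θ · Q_U(s,ω,a)`, where
`μ_Ω(s,ω|s₀,ω₀) = ∑_{k=0}^∞ P_γ^{(k)}(s,ω|s₀,ω₀)`. -/
theorem intra_option_policy_gradient
    {S A O : Type*} [Fintype S] [Fintype A] [Fintype O]
    [DecidableEq S] [DecidableEq O]
    {d : ℕ} (θ₀ : Fin d → ℝ)
    (P : S → A → S → ℝ) (r : S → A → ℝ) (γ : ℝ)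
    (hP0 : ∀ s a s', 0 ≤ P s a s') (hP1 : ∀ s a, ∑ s', P s a s' = 1)
    (hγ0 : 0 ≤ γ) (hγ1 : γ < 1)
    (π : (Fin d → ℝ) → O → S → A → ℝ)
    (hπ0 : ∀ θ ω s a, 0 ≤ π θ ω s a) (hπ1 : ∀ θ ω s, ∑ a, π θ ω s a = 1)
    (β : O → S → ℝ) (hβ0 : ∀ ω s, 0 ≤ β ω s) (hβ1 : ∀ ω s, β ω s ≤ 1)
    (πΩ : S → O → ℝ) (hπΩ0 : ∀ s ω, 0 ≤ πΩ s ω) (hπΩ1 : ∀ s, ∑ ω, πΩ s ω = 1)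
    (Q : (Fin d → ℝ) → S → O → ℝ) (U : (Fin d → ℝ) → O → S → ℝ)
    (QU : (Fin d → ℝ) → S → O → A → ℝ)
    (hQ : ∀ θ s ω, Q θ s ω = ∑ a, π θ ω s a * QU θ s ω a)
    (hQU : ∀ θ s ω a, QU θ s ω a = r s a + γ * ∑ s', P s a s' * U θ ω s')
    (hU : ∀ θ ω s', U θ ω s' =
      (1 - β ω s') * Q θ s' ω + β ω s' * ∑ ω', πΩ s' ω' * Q θ s' ω')
    -- the k-step discounted augmented transition kernel at `θ₀`
    (Pk : ℕ → (S × O) → (S × O) → ℝ)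
    (hPk0 : ∀ x y, Pk 0 x y = if x = y then 1 else 0)
    (hPkS : ∀ k x y, Pk (k + 1) x y = ∑ z : S × O,
      (∑ a, π θ₀ x.2 x.1 a * (γ * P x.1 a z.1) *
        ((1 - β x.2 z.1) * (if z.2 = x.2 then 1 else 0) + β x.2 z.1 * πΩ z.1 z.2))
        * Pk k z y)
    (hπdiff : ∀ ω s a, DifferentiableAt ℝ (fun θ => π θ ω s a) θ₀)
    (s₀ : S) (ω₀ : O) :
    HasFDerivAt (fun θ => Q θ s₀ ω₀)
      (∑ s, ∑ ω, (∑' k, Pk k (s₀, ω₀) (s, ω)) •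
        ∑ a, QU θ₀ s ω a • fderiv ℝ (fun θ => π θ ω s a) θ₀) θ₀ := by
  classical
  set x₀ : S × O := (s₀, ω₀) with hx₀
  -- abbreviations
  set K : (Fin d → ℝ) → Matrix (S × O) (S × O) ℝ :=
    fun θ => iopgKer P γ β πΩ (π θ) with hK
  set b : (Fin d → ℝ) → (S × O) → ℝ :=
    fun θ x => ∑ a, π θ x.2 x.1 a * r x.1 a with hb
  -- entries of K are nonnegative
  have hKnn : ∀ θ x z, 0 ≤ K θ x z := by
    intro θ x z
    refine Finset.sum_nonneg fun a _ => ?_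
    have h1 : (0:ℝ) ≤ 1 - β x.2 z.1 := by linarith [hβ1 x.2 z.1]
    have h2 : (0:ℝ) ≤ (if z.2 = x.2 then (1:ℝ) else 0) := by positivity
    have := hπ0 θ x.2 x.1 a
    have := hP0 x.1 a z.1
    have := hβ0 x.2 z.1
    have := hπΩ0 z.1 z.2
    unfold iopgW
    positivity
  -- row sums of K equal γ
  have hrow : ∀ θ x, ∑ z : S × O, K θ x z = γ := by
    intro θ x
    have huu : ∀ (ω : O) (s' : S), (1:ℝ) =
        (1 - β ω s') * (fun _ _ => (1:ℝ)) s' ω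
          + β ω s' * ∑ ω', πΩ s' ω' * (fun _ _ => (1:ℝ)) s' ω' := by
      intro ω s'
      simp only [mul_one]
      rw [hπΩ1 s']
      ring
    have := iopgKer_combo P γ β πΩ (π θ) (fun _ _ => 1) (fun _ _ => 1)
      (fun ω s' => huu ω s') x
    simp only [mul_one] at this
    rw [this]
    have : ∀ a : A, π θ x.2 x.1 a * (γ * ∑ s', P x.1 a s') = π θ x.2 x.1 a * γ := by
      intro a; rw [hP1]; ring
    rw [Finset.sum_congr rfl fun a _ => this a, ← Finset.sum_mul, hπ1, one_mul]
  -- norm bound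
  have hKlt : ∀ θ, ‖K θ‖ < 1 := fun θ =>
    lt_of_le_of_lt
      (iopg_matrix_norm_le (K θ) hγ0 (hKnn θ) (fun x => le_of_eq (hrow θ x))) hγ1
  -- the unit 1 - K θ
  set u : (Fin d → ℝ) → (Matrix (S × O) (S × O) ℝ)ˣ :=
    fun θ => Units.oneSub (K θ) (hKlt θ) with hu
  -- fixed point equation
  have hcombo : ∀ θ x, ∑ z : S × O, K θ x z * Q θ z.1 z.2
      = ∑ a, π θ x.2 x.1 a * (γ * ∑ s', P x.1 a s' * U θ x.2 s') :=
    fun θ x => iopgKer_combo P γ β πΩ (π θ) (fun s ω => Q θ s ω) (fun ω s => U θ ω s)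
      (fun ω s' => hU θ ω s') x
  have hfix : ∀ θ, (1 - K θ) *ᵥ (fun z : S × O => Q θ z.1 z.2) = b θ := by
    intro θ
    funext x
    rw [Matrix.sub_mulVec, Matrix.one_mulVec]
    show Q θ x.1 x.2 - (K θ *ᵥ fun z : S × O => Q θ z.1 z.2) x = b θ x
    have : (K θ *ᵥ fun z : S × O => Q θ z.1 z.2) x
        = ∑ z : S × O, K θ x z * Q θ z.1 z.2 := by
      simp [Matrix.mulVec, dotProduct]
    rw [this, hcombo θ x, hQ θ x.1 x.2]
    rw [Finset.sum_congr rfl fun a _ => by rw [hQU θ x.1 x.2 a]]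
    simp only [hb, mul_add, Finset.sum_add_distrib]
    ring
  have hQrepr : ∀ θ, (fun z : S × O => Q θ z.1 z.2)
      = Ring.inverse (1 - K θ) *ᵥ b θ := by
    intro θ
    have h1 : Ring.inverse (1 - K θ) = ↑(u θ)⁻¹ := by
      rw [show (1 - K θ) = ↑(u θ) from rfl, Ring.inverse_unit]
    rw [h1, ← hfix θ]
    rw [show (1 - K θ) = ↑(u θ) from rfl]
    rw [Matrix.mulVec_mulVec, Units.inv_mul, Matrix.one_mulVec]
  -- derivative of K
  set c' : O → S → A → ((Fin d → ℝ) →L[ℝ] ℝ) :=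
    fun ω s a => fderiv ℝ (fun θ => π θ ω s a) θ₀ with hc'
  set M' : (Fin d → ℝ) →L[ℝ] Matrix (S × O) (S × O) ℝ :=
    ∑ x : S × O, ∑ z : S × O, ∑ a : A,
      (c' x.2 x.1 a).smulRight (iopgW P γ β πΩ x z a • Matrix.single x z (1:ℝ))
    with hM'
  have hKdiff : HasFDerivAt K M' θ₀ := by
    have hfun : K = fun θ => ∑ x : S × O, ∑ z : S × O, ∑ a : A,
        π θ x.2 x.1 a • (iopgW P γ β πΩ x z a • Matrix.single x z (1:ℝ)) :=
      funext fun θ => iopgKer_decomp P γ β πΩ (π θ)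
    rw [hfun, hM']
    refine HasFDerivAt.fun_sum fun x _ => HasFDerivAt.fun_sum fun z _ => HasFDerivAt.fun_sum fun a _ => ?_
    exact (hπdiff x.2 x.1 a).hasFDerivAt.smul_const _
  -- M' applied to a direction is a generalized kernel
  have hM'app : ∀ h : Fin d → ℝ,
      M' h = iopgKer P γ β πΩ (fun ω s a => c' ω s a h) := by
    intro h
    rw [iopgKer_decomp, hM']
    simp only [ContinuousLinearMap.coe_sum', Finset.sum_apply,
      ContinuousLinearMap.smulRight_apply]
  -- derivative of the resolvent
  set N : (Fin d → ℝ) → Matrix (S × O) (S × O) ℝ :=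
    fun θ => Ring.inverse (1 - K θ) with hN
  set DN : (Fin d → ℝ) →L[ℝ] Matrix (S × O) (S × O) ℝ :=
    ((-(ContinuousLinearMap.mulLeftRight ℝ _ (↑(u θ₀)⁻¹) (↑(u θ₀)⁻¹))).comp (-M'))
    with hDN
  have hNdiff : HasFDerivAt N DN θ₀ := by
    have h1 : HasFDerivAt (fun θ => 1 - K θ) (-M') θ₀ := hKdiff.const_sub 1
    have h2 := (hasFDerivAt_ringInverse (𝕜 := ℝ) (u θ₀)).comp θ₀
      (by exact h1 : HasFDerivAt (fun θ => 1 - K θ) (-M') θ₀)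
    exact h2
  -- evaluation continuous linear maps
  set E : (S × O) → (Matrix (S × O) (S × O) ℝ →L[ℝ] ℝ) :=
    fun z => LinearMap.toContinuousLinearMap (Matrix.entryLinearMap ℝ ℝ x₀ z) with hE
  have hEapp : ∀ z M, E z M = M x₀ z := fun z M => rfl
  -- the scalar function as a finite sum of products
  have hfun : (fun θ => Q θ s₀ ω₀)
      = fun θ => ∑ z : S × O, N θ x₀ z * b θ z := by
    funext θ
    have := congrFun (hQrepr θ) x₀
    simpa [Matrix.mulVec, dotProduct, hx₀] using this
  have hbz : ∀ z : S × O, HasFDerivAt (fun θ => b θ z)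
      (∑ a, r z.1 a • c' z.2 z.1 a) θ₀ :=
    fun z => HasFDerivAt.fun_sum fun a _ => (hπdiff z.2 z.1 a).hasFDerivAt.mul_const (r z.1 a)
  have hNz : ∀ z : S × O, HasFDerivAt (fun θ => N θ x₀ z) ((E z).comp DN) θ₀ :=
    fun z => ((E z).hasFDerivAt).comp θ₀ hNdiff
  have main : HasFDerivAt (fun θ => ∑ z : S × O, N θ x₀ z * b θ z)
      (∑ z : S × O, (N θ₀ x₀ z • (∑ a, r z.1 a • c' z.2 z.1 a)
        + b θ₀ z • ((E z).comp DN))) θ₀ :=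
    HasFDerivAt.fun_sum fun z _ => (hNz z).mul (hbz z)
  rw [hfun]
  convert main using 1
  -- identify the two continuous linear maps
  have hμ : ∀ y : S × O, (∑' k, Pk k x₀ y) = N θ₀ x₀ y := by
    intro y
    have hpow : ∀ k, ∀ x y : S × O, Pk k x y = (K θ₀ ^ k) x y := by
      intro k
      induction k with
      | zero => intro x y; rw [hPk0]; simp [Matrix.one_apply]
      | succ k ih =>
        intro x y
        rw [hPkS, pow_succ', Matrix.mul_apply]
        refine Finset.sum_congr rfl fun z _ => ?_
        rw [ih]
        congr 1
        simp only [hK, iopgKer, iopgW, Matrix.of_apply]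
        exact Finset.sum_congr rfl fun a _ => by ring
    rw [tsum_congr fun k => hpow k x₀ y]
    have hgeom : HasSum (fun k : ℕ => K θ₀ ^ k) (N θ₀) := by
      rw [hN]; exact hasSum_geom_series_inverse (K θ₀) (hKlt θ₀)
    have := ((E y).hasSum hgeom).tsum_eq
    simpa [hEapp] using this
  apply ContinuousLinearMap.ext
  intro h
  set ch : O → S → A → ℝ := fun ω s a => c' ω s a h with hch
  set Kc : Matrix (S × O) (S × O) ℝ := iopgKer P γ β πΩ ch with hKc
  have hNinv : (↑(u θ₀)⁻¹ : Matrix (S × O) (S × O) ℝ) = N θ₀ :=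
    (Ring.inverse_unit (u θ₀)).symm
  have hDNh : DN h = N θ₀ * Kc * N θ₀ := by
    rw [hDN]
    erw [ContinuousLinearMap.comp_apply]
    simp only [ContinuousLinearMap.comp_apply, ContinuousLinearMap.neg_apply,
      ContinuousLinearMap.mulLeftRight_apply, hM'app h, hNinv]
    change -(N θ₀ * (-(M' h)) * N θ₀) = N θ₀ * Kc * N θ₀
    rw [hM'app h]
    rw [show (iopgKer P γ β πΩ fun ω s a => c' ω s a h) = Kc from rfl]
    simp [mul_neg, neg_mul, neg_neg]
  have hq₀ : N θ₀ *ᵥ b θ₀ = fun z : S × O => Q θ₀ z.1 z.2 := (hQrepr θ₀).symm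
  have hcombo2 : ∀ y : S × O, ∑ z : S × O, Kc y z * Q θ₀ z.1 z.2
      = ∑ a, ch y.2 y.1 a * (γ * ∑ s', P y.1 a s' * U θ₀ y.2 s') :=
    fun y => iopgKer_combo P γ β πΩ ch (fun s ω => Q θ₀ s ω) (fun ω s => U θ₀ ω s)
      (fun ω s' => hU θ₀ ω s') y
  have hinner : ∀ y : S × O, ∑ z : S × O, (Kc * N θ₀) y z * b θ₀ z
      = ∑ a, ch y.2 y.1 a * (γ * ∑ s', P y.1 a s' * U θ₀ y.2 s') := by
    intro y
    have h1 : ∑ z : S × O, (Kc * N θ₀) y z * b θ₀ z = ((Kc * N θ₀) *ᵥ b θ₀) y := by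
      simp [Matrix.mulVec, dotProduct]
    rw [h1, ← Matrix.mulVec_mulVec, hq₀]
    have h2 : (Kc *ᵥ fun z : S × O => Q θ₀ z.1 z.2) y
        = ∑ z : S × O, Kc y z * Q θ₀ z.1 z.2 := by
      simp [Matrix.mulVec, dotProduct]
    rw [h2, hcombo2]
  simp only [ContinuousLinearMap.coe_sum', Finset.sum_apply, ContinuousLinearMap.add_apply,
    ContinuousLinearMap.smul_apply, ContinuousLinearMap.comp_apply, smul_eq_mul, hEapp, hDNh, hμ]
  have hstep : ∀ y : S × O, N θ₀ x₀ y * ∑ a, QU θ₀ y.1 y.2 a * ch y.2 y.1 a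
      = N θ₀ x₀ y * (∑ a, r y.1 a * ch y.2 y.1 a)
        + N θ₀ x₀ y * (∑ a, ch y.2 y.1 a * (γ * ∑ s', P y.1 a s' * U θ₀ y.2 s')) := by
    intro y
    rw [← mul_add, ← Finset.sum_add_distrib]
    congr 1
    refine Finset.sum_congr rfl fun a _ => ?_
    rw [hQU θ₀ y.1 y.2 a]
    ring
  have hT2 : ∑ x : S × O, b θ₀ x * (N θ₀ * Kc * N θ₀) x₀ x
      = ∑ y : S × O, N θ₀ x₀ y * (∑ a, ch y.2 y.1 a *
          (γ * ∑ s', P y.1 a s' * U θ₀ y.2 s')) := by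
    calc ∑ x : S × O, b θ₀ x * (N θ₀ * Kc * N θ₀) x₀ x
        = ∑ x : S × O, b θ₀ x * ∑ y : S × O, N θ₀ x₀ y * (Kc * N θ₀) y x :=
          Finset.sum_congr rfl fun x _ => by
            rw [Matrix.mul_assoc, Matrix.mul_apply]
      _ = ∑ x : S × O, ∑ y : S × O, b θ₀ x * (N θ₀ x₀ y * (Kc * N θ₀) y x) :=
          Finset.sum_congr rfl fun x _ => Finset.mul_sum _ _ _
      _ = ∑ y : S × O, ∑ x : S × O, b θ₀ x * (N θ₀ x₀ y * (Kc * N θ₀) y x) :=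
          Finset.sum_comm
      _ = ∑ y : S × O, N θ₀ x₀ y * ∑ x : S × O, (Kc * N θ₀) y x * b θ₀ x := by
          refine Finset.sum_congr rfl fun y _ => ?_
          rw [Finset.mul_sum]
          exact Finset.sum_congr rfl fun x _ => by ring
      _ = _ := Finset.sum_congr rfl fun y _ => by rw [hinner y]
  calc ∑ s : S, ∑ ω : O, N θ₀ x₀ (s, ω) * ∑ a : A, QU θ₀ s ω a * ch ω s a
      = ∑ y : S × O, N θ₀ x₀ y * ∑ a, QU θ₀ y.1 y.2 a * ch y.2 y.1 a :=
        (Fintype.sum_prod_type (f := fun y : S × O =>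
          N θ₀ x₀ y * ∑ a, QU θ₀ y.1 y.2 a * ch y.2 y.1 a)).symm
    _ = ∑ y : S × O, (N θ₀ x₀ y * (∑ a, r y.1 a * ch y.2 y.1 a)
          + N θ₀ x₀ y * (∑ a, ch y.2 y.1 a * (γ * ∑ s', P y.1 a s' * U θ₀ y.2 s'))) :=
        Finset.sum_congr rfl fun y _ => hstep y
    _ = (∑ y : S × O, N θ₀ x₀ y * (∑ a, r y.1 a * ch y.2 y.1 a))
          + ∑ y : S × O, N θ₀ x₀ y * (∑ a, ch y.2 y.1 a *
              (γ * ∑ s', P y.1 a s' * U θ₀ y.2 s')) :=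
        Finset.sum_add_distrib
    _ = (∑ y : S × O, N θ₀ x₀ y * (∑ a, r y.1 a * ch y.2 y.1 a))
          + ∑ x : S × O, b θ₀ x * (N θ₀ * Kc * N θ₀) x₀ x := by rw [← hT2]
    _ = ∑ x : S × O, (N θ₀ x₀ x * (∑ a, r x.1 a * ch x.2 x.1 a)
          + b θ₀ x * (N θ₀ * Kc * N θ₀) x₀ x) := Finset.sum_add_distrib.symm
end

section
/- Termination Gradient Theorem: Fix ϑ ∈ ℝ^m and assume for every option ω and state s the map ϑ ↦ β_{ω,ϑ}(s) is differentiable at ϑ. Then for every initial pair (s₁, ω₀), the map ϑ ↦ U^ϑ(ω₀, s₁) is differentiable and its gradient equals −∑_{s',ω} μ̃_Ω(s', ω | s₁, ω₀) (∂β_{ω,ϑ}(s')/∂ϑ) · A_Ω^ϑ(s', ω), where A_Ω^ϑ(s', ω) = Q_Ω^ϑ(s', ω) − V_Ω^ϑ(s') is the advantage function over options, and μ̃_Ω(s', ω | s₁, ω₀) = ∑_{k=0}^∞ P̃_γ^{(k)}(s', ω | s₁, ω₀) is the discounted weighting of state-option pairs along the shifted augmented chain started at (s₁, ω₀). -/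
open Asymptotics Filter Finset

theorem neumann_grad {X : Type*} [Fintype X] [DecidableEq X] {m : ℕ} {ϑ₀ : Fin m → ℝ}
    {γ : ℝ} (hγ0 : 0 ≤ γ) (hγ1 : γ < 1)
    (M : (Fin m → ℝ) → X → X → ℝ)
    (hMrow : ∀ ϑ x, ∑ z, |M ϑ x z| ≤ γ)
    (hMcont : ∀ x z, ContinuousAt (fun ϑ => M ϑ x z) ϑ₀)
    (u w : (Fin m → ℝ) → X → ℝ)
    (hrec : ∀ ϑ x, u ϑ x - u ϑ₀ x = w ϑ x + ∑ z, M ϑ x z * (u ϑ z - u ϑ₀ z))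
    (hw0 : ∀ x, w ϑ₀ x = 0)
    (D : X → (Fin m → ℝ) →L[ℝ] ℝ)
    (hw : ∀ x, HasFDerivAt (fun ϑ => w ϑ x) (D x) ϑ₀)
    (Pk : ℕ → X → X → ℝ)
    (hPk0 : ∀ x y, Pk 0 x y = if x = y then 1 else 0)
    (hPkS : ∀ k x y, Pk (k+1) x y = ∑ z, M ϑ₀ x z * Pk k z y)
    (x₁ : X) :
    HasFDerivAt (fun ϑ => u ϑ x₁) (∑ y, (∑' k, Pk k x₁ y) • D y) ϑ₀ := by
  classical
  -- row bounds on powers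
  have hrow : ∀ k x, ∑ y, |Pk k x y| ≤ γ ^ k := by
    intro k
    induction k with
    | zero => intro x; simp [hPk0, apply_ite abs, Finset.sum_ite_eq]
    | succ k ih =>
      intro x
      calc ∑ y, |Pk (k+1) x y| ≤ ∑ y, ∑ z, |M ϑ₀ x z| * |Pk k z y| := by
            refine Finset.sum_le_sum fun y _ => ?_
            rw [hPkS]
            refine (Finset.abs_sum_le_sum_abs _ _).trans (le_of_eq ?_)
            exact Finset.sum_congr rfl fun z _ => abs_mul _ _
        _ = ∑ z, |M ϑ₀ x z| * ∑ y, |Pk k z y| := by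
            rw [Finset.sum_comm]; exact Finset.sum_congr rfl fun z _ => (Finset.mul_sum _ _ _).symm
        _ ≤ ∑ z, |M ϑ₀ x z| * γ ^ k :=
            Finset.sum_le_sum fun z _ => mul_le_mul_of_nonneg_left (ih z) (abs_nonneg _)
        _ = (∑ z, |M ϑ₀ x z|) * γ ^ k := (Finset.sum_mul _ _ _).symm
        _ ≤ γ * γ ^ k := mul_le_mul_of_nonneg_right (hMrow _ _) (pow_nonneg hγ0 k)
        _ = γ ^ (k+1) := (pow_succ' γ k).symm
  have habs : ∀ k x y, |Pk k x y| ≤ γ ^ k := fun k x y =>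
    (Finset.single_le_sum (fun i _ => abs_nonneg (Pk k x i)) (Finset.mem_univ y)).trans (hrow k x)
  have hsum : ∀ x y, Summable fun k => Pk k x y := fun x y =>
    Summable.of_norm_bounded (summable_geometric_of_lt_one hγ0 hγ1)
      (fun k => by simpa [Real.norm_eq_abs] using habs k x y)
  set N : X → ℝ := fun y => ∑' k, Pk k x₁ y with hN
  -- right recursion for powers
  have hPkR : ∀ k x y, Pk (k+1) x y = ∑ z, Pk k x z * M ϑ₀ z y := by
    intro k
    induction k with
    | zero =>
      intro x y
      rw [hPkS]
      simp [hPk0]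
    | succ k ih =>
      intro x y
      rw [hPkS]
      calc ∑ z, M ϑ₀ x z * Pk (k+1) z y = ∑ z, M ϑ₀ x z * ∑ v, Pk k z v * M ϑ₀ v y :=
            Finset.sum_congr rfl fun z _ => by rw [ih]
        _ = ∑ v, (∑ z, M ϑ₀ x z * Pk k z v) * M ϑ₀ v y := by
            simp_rw [Finset.mul_sum, Finset.sum_mul]
            rw [Finset.sum_comm]
            exact Finset.sum_congr rfl fun v _ => Finset.sum_congr rfl fun z _ => by ring
        _ = ∑ v, Pk (k+1) x v * M ϑ₀ v y :=
            Finset.sum_congr rfl fun v _ => by rw [← hPkS]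
  -- Neumann right recursion
  have hNrec : ∀ y, N y = (if x₁ = y then 1 else 0) + ∑ z, N z * M ϑ₀ z y := by
    intro y
    rw [hN]
    simp only
    rw [Summable.tsum_eq_zero_add (hsum x₁ y), hPk0]
    congr 1
    calc ∑' k, Pk (k+1) x₁ y = ∑' k, ∑ z, Pk k x₁ z * M ϑ₀ z y :=
          tsum_congr fun k => hPkR k x₁ y
      _ = ∑ z, ∑' k, Pk k x₁ z * M ϑ₀ z y :=
          Summable.tsum_finsetSum (fun z _ => (hsum x₁ z).mul_right _)
      _ = ∑ z, N z * M ϑ₀ z y := Finset.sum_congr rfl fun z _ => tsum_mul_right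
  -- inversion identity
  have hinv : ∀ v : X → ℝ, ∑ y, N y * (v y - ∑ z, M ϑ₀ y z * v z) = v x₁ := by
    intro v
    have h2 : ∀ z, ∑ y, N y * M ϑ₀ y z = N z - (if x₁ = z then 1 else 0) := by
      intro z
      rw [hNrec z]
      ring
    calc ∑ y, N y * (v y - ∑ z, M ϑ₀ y z * v z)
        = ∑ y, (N y * v y - ∑ z, N y * (M ϑ₀ y z * v z)) := by
          refine Finset.sum_congr rfl fun y _ => ?_
          rw [mul_sub, Finset.mul_sum]
      _ = ∑ y, N y * v y - ∑ y, ∑ z, N y * (M ϑ₀ y z * v z) := Finset.sum_sub_distrib _ _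
      _ = ∑ y, N y * v y - ∑ z, (∑ y, N y * M ϑ₀ y z) * v z := by
          rw [Finset.sum_comm]
          congr 1
          refine Finset.sum_congr rfl fun z _ => ?_
          rw [Finset.sum_mul]
          exact Finset.sum_congr rfl fun y _ => by ring
      _ = ∑ z, (if x₁ = z then 1 else 0) * v z := by
          simp_rw [h2, sub_mul]
          rw [Finset.sum_sub_distrib]
          ring
      _ = v x₁ := by simp [Finset.sum_ite_eq]
  -- key decomposition
  have hkey : ∀ ϑ, u ϑ x₁ - u ϑ₀ x₁
      = ∑ y, N y * w ϑ y + ∑ y, N y * ∑ z, (M ϑ y z - M ϑ₀ y z) * (u ϑ z - u ϑ₀ z) := by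
    intro ϑ
    have h1 : ∀ y, (u ϑ y - u ϑ₀ y) - ∑ z, M ϑ₀ y z * (u ϑ z - u ϑ₀ z)
        = w ϑ y + ∑ z, (M ϑ y z - M ϑ₀ y z) * (u ϑ z - u ϑ₀ z) := by
      intro y
      rw [hrec ϑ y]
      simp_rw [sub_mul]
      rw [Finset.sum_sub_distrib]
      ring
    calc u ϑ x₁ - u ϑ₀ x₁
        = ∑ y, N y * ((u ϑ y - u ϑ₀ y) - ∑ z, M ϑ₀ y z * (u ϑ z - u ϑ₀ z)) :=
          (hinv fun z => u ϑ z - u ϑ₀ z).symm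
      _ = ∑ y, (N y * w ϑ y + N y * ∑ z, (M ϑ y z - M ϑ₀ y z) * (u ϑ z - u ϑ₀ z)) := by
          refine Finset.sum_congr rfl fun y _ => ?_
          rw [h1, mul_add]
      _ = _ := Finset.sum_add_distrib
  -- sup-norm bound on the difference
  have hd1 : ∀ ϑ, ‖(fun x => u ϑ x - u ϑ₀ x)‖ ≤ (1 - γ)⁻¹ * ‖(fun x => w ϑ x)‖ := by
    intro ϑ
    have hγ' : (0:ℝ) < 1 - γ := by linarith
    have h2 : ‖(fun x => u ϑ x - u ϑ₀ x)‖
        ≤ ‖(fun x => w ϑ x)‖ + γ * ‖(fun x => u ϑ x - u ϑ₀ x)‖ := by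
      rw [pi_norm_le_iff_of_nonneg (by positivity)]
      intro x
      rw [Real.norm_eq_abs]
      calc |u ϑ x - u ϑ₀ x| = |w ϑ x + ∑ z, M ϑ x z * (u ϑ z - u ϑ₀ z)| := by rw [hrec ϑ x]
        _ ≤ |w ϑ x| + ∑ z, |M ϑ x z| * |u ϑ z - u ϑ₀ z| := by
            refine (abs_add_le _ _).trans (add_le_add (le_refl _) ?_)
            refine (Finset.abs_sum_le_sum_abs _ _).trans (le_of_eq ?_)
            exact Finset.sum_congr rfl fun z _ => abs_mul _ _
        _ ≤ ‖(fun x => w ϑ x)‖ + ∑ z, |M ϑ x z| * ‖(fun x => u ϑ x - u ϑ₀ x)‖ := by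
            refine add_le_add ?_ (Finset.sum_le_sum fun z _ => ?_)
            · simpa [Real.norm_eq_abs] using norm_le_pi_norm (fun x => w ϑ x) x
            · refine mul_le_mul_of_nonneg_left ?_ (abs_nonneg _)
              simpa [Real.norm_eq_abs] using norm_le_pi_norm (fun x => u ϑ x - u ϑ₀ x) z
        _ ≤ ‖(fun x => w ϑ x)‖ + γ * ‖(fun x => u ϑ x - u ϑ₀ x)‖ := by
            rw [← Finset.sum_mul]
            exact add_le_add (le_refl _)
              (mul_le_mul_of_nonneg_right (hMrow ϑ x) (norm_nonneg _))
    rw [inv_mul_eq_div, le_div_iff₀ hγ']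
    nlinarith [norm_nonneg (fun x => u ϑ x - u ϑ₀ x)]
  -- big-O facts
  have hwO : (fun ϑ => (fun x => w ϑ x)) =O[nhds ϑ₀] (fun ϑ => ϑ - ϑ₀) := by
    rw [isBigO_pi]
    intro x
    simpa [hw0 x] using (hw x).isBigO_sub
  have hdO : (fun ϑ => (fun x => u ϑ x - u ϑ₀ x)) =O[nhds ϑ₀] (fun ϑ => ϑ - ϑ₀) := by
    refine (IsBigO.of_bound ((1-γ)⁻¹) (Eventually.of_forall fun ϑ => ?_)).trans hwO
    simpa [Real.norm_eq_abs] using hd1 ϑ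
  -- ε → 0
  have hε : Tendsto (fun ϑ => ∑ y : X, ∑ z : X, |M ϑ y z - M ϑ₀ y z|) (nhds ϑ₀) (nhds 0) := by
    have h0 : (0:ℝ) = ∑ y : X, ∑ z : X, |M ϑ₀ y z - M ϑ₀ y z| := by simp
    rw [h0]
    refine tendsto_finset_sum _ fun y _ => tendsto_finset_sum _ fun z _ => ?_
    exact ((hMcont y z).sub continuousAt_const).abs
  -- remainder is little-o
  have hRo : (fun ϑ => ∑ y, N y * ∑ z, (M ϑ y z - M ϑ₀ y z) * (u ϑ z - u ϑ₀ z)) =o[nhds ϑ₀]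
      (fun ϑ => ϑ - ϑ₀) := by
    have hbig : (fun ϑ => ∑ y, N y * ∑ z, (M ϑ y z - M ϑ₀ y z) * (u ϑ z - u ϑ₀ z)) =O[nhds ϑ₀]
        (fun ϑ => (∑ y : X, ∑ z : X, |M ϑ y z - M ϑ₀ y z|) * ‖(fun x => u ϑ x - u ϑ₀ x)‖) := by
      refine IsBigO.of_bound (∑ y, |N y|) (Eventually.of_forall fun ϑ => ?_)
      rw [Real.norm_eq_abs]
      have hεnn : 0 ≤ ∑ y : X, ∑ z : X, |M ϑ y z - M ϑ₀ y z| :=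
        Finset.sum_nonneg fun y _ => Finset.sum_nonneg fun z _ => abs_nonneg _
      have hb : ∀ y, |∑ z, (M ϑ y z - M ϑ₀ y z) * (u ϑ z - u ϑ₀ z)|
          ≤ (∑ y : X, ∑ z : X, |M ϑ y z - M ϑ₀ y z|) * ‖(fun x => u ϑ x - u ϑ₀ x)‖ := by
        intro y
        calc |∑ z, (M ϑ y z - M ϑ₀ y z) * (u ϑ z - u ϑ₀ z)|
            ≤ ∑ z, |M ϑ y z - M ϑ₀ y z| * |u ϑ z - u ϑ₀ z| := by
              refine (Finset.abs_sum_le_sum_abs _ _).trans (le_of_eq ?_)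
              exact Finset.sum_congr rfl fun z _ => abs_mul _ _
          _ ≤ ∑ z, |M ϑ y z - M ϑ₀ y z| * ‖(fun x => u ϑ x - u ϑ₀ x)‖ := by
              refine Finset.sum_le_sum fun z _ => mul_le_mul_of_nonneg_left ?_ (abs_nonneg _)
              simpa [Real.norm_eq_abs] using norm_le_pi_norm (fun x => u ϑ x - u ϑ₀ x) z
          _ = (∑ z, |M ϑ y z - M ϑ₀ y z|) * ‖(fun x => u ϑ x - u ϑ₀ x)‖ :=
              (Finset.sum_mul _ _ _).symm
          _ ≤ _ := by
              refine mul_le_mul_of_nonneg_right ?_ (norm_nonneg _)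
              exact Finset.single_le_sum
                (fun i (_ : i ∈ Finset.univ) =>
                  Finset.sum_nonneg fun z _ => abs_nonneg (M ϑ i z - M ϑ₀ i z))
                (Finset.mem_univ y)
      calc |∑ y, N y * ∑ z, (M ϑ y z - M ϑ₀ y z) * (u ϑ z - u ϑ₀ z)|
          ≤ ∑ y, |N y| * |∑ z, (M ϑ y z - M ϑ₀ y z) * (u ϑ z - u ϑ₀ z)| := by
            refine (Finset.abs_sum_le_sum_abs _ _).trans (le_of_eq ?_)
            exact Finset.sum_congr rfl fun y _ => abs_mul _ _
        _ ≤ ∑ y, |N y| * ((∑ y : X, ∑ z : X, |M ϑ y z - M ϑ₀ y z|)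
              * ‖(fun x => u ϑ x - u ϑ₀ x)‖) :=
            Finset.sum_le_sum fun y _ => mul_le_mul_of_nonneg_left (hb y) (abs_nonneg _)
        _ = (∑ y, |N y|) * ((∑ y : X, ∑ z : X, |M ϑ y z - M ϑ₀ y z|)
              * ‖(fun x => u ϑ x - u ϑ₀ x)‖) := (Finset.sum_mul _ _ _).symm
        _ ≤ (∑ y, |N y|) * ‖(∑ y : X, ∑ z : X, |M ϑ y z - M ϑ₀ y z|)
              * ‖(fun x => u ϑ x - u ϑ₀ x)‖‖ := by
            rw [Real.norm_eq_abs, abs_of_nonneg (mul_nonneg hεnn (norm_nonneg _))]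
    refine hbig.trans_isLittleO ?_
    have h1 : (fun ϑ => ∑ y : X, ∑ z : X, |M ϑ y z - M ϑ₀ y z|) =o[nhds ϑ₀]
        (fun _ => (1:ℝ)) := (isLittleO_one_iff ℝ).2 hε
    have h2 : (fun ϑ => ‖(fun x => u ϑ x - u ϑ₀ x)‖) =O[nhds ϑ₀] (fun ϑ => ‖ϑ - ϑ₀‖) :=
      hdO.norm_norm
    exact isLittleO_norm_right.mp (by simpa only [one_mul] using h1.mul_isBigO h2)
  -- main term
  have hg : HasFDerivAt (fun ϑ => ∑ y, N y * w ϑ y) (∑ y, N y • D y) ϑ₀ :=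
    HasFDerivAt.fun_sum fun y _ => (hw y).const_mul (N y)
  refine HasFDerivAt.of_isLittleO ?_
  have heq : ∀ ϑ, u ϑ x₁ - u ϑ₀ x₁ - (∑ y, N y • D y) (ϑ - ϑ₀)
      = ((∑ y, N y * w ϑ y) - (∑ y, N y * w ϑ₀ y) - (∑ y, N y • D y) (ϑ - ϑ₀))
        + ∑ y, N y * ∑ z, (M ϑ y z - M ϑ₀ y z) * (u ϑ z - u ϑ₀ z) := by
    intro ϑ
    rw [hkey ϑ]
    have h0 : ∑ y, N y * w ϑ₀ y = 0 := by simp [hw0]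
    rw [h0]
    ring
  exact (hg.isLittleO.add hRo).congr (fun ϑ => (heq ϑ).symm) (fun _ => rfl)



/-- **Termination Gradient Theorem.** For a finite MDP with options, if every
termination probability `β ϑ ω s` is differentiable at `ϑ₀`, then the value upon
arrival `ϑ ↦ U ϑ ω₀ s₁` is differentiable at `ϑ₀` with gradient
`−∑_{s',ω} μ̃_Ω(s',ω|s₁,ω₀) ∂β_{ω,ϑ}(s')/∂ϑ · A_Ω(s',ω)`, where
`A_Ω(s',ω) = Q_Ω(s',ω) − V_Ω(s')` and `μ̃_Ω = ∑_{k=0}^∞ P̃_γ^{(k)}` is the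
discounted weighting along the shifted augmented chain. -/
theorem termination_gradient
    {S A O : Type*} [Fintype S] [Fintype A] [Fintype O]
    [DecidableEq S] [DecidableEq O]
    {m : ℕ} (ϑ₀ : Fin m → ℝ)
    (P : S → A → S → ℝ) (r : S → A → ℝ) (γ : ℝ)
    (hP0 : ∀ s a s', 0 ≤ P s a s') (hP1 : ∀ s a, ∑ s', P s a s' = 1)
    (hγ0 : 0 ≤ γ) (hγ1 : γ < 1)
    (π : O → S → A → ℝ)
    (hπ0 : ∀ ω s a, 0 ≤ π ω s a) (hπ1 : ∀ ω s, ∑ a, π ω s a = 1)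
    (β : (Fin m → ℝ) → O → S → ℝ)
    (hβ0 : ∀ ϑ ω s, 0 ≤ β ϑ ω s) (hβ1 : ∀ ϑ ω s, β ϑ ω s ≤ 1)
    (πΩ : S → O → ℝ) (hπΩ0 : ∀ s ω, 0 ≤ πΩ s ω) (hπΩ1 : ∀ s, ∑ ω, πΩ s ω = 1)
    (Q : (Fin m → ℝ) → S → O → ℝ) (U : (Fin m → ℝ) → O → S → ℝ)
    (QU : (Fin m → ℝ) → S → O → A → ℝ)
    (hQ : ∀ ϑ s ω, Q ϑ s ω = ∑ a, π ω s a * QU ϑ s ω a)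
    (hQU : ∀ ϑ s ω a, QU ϑ s ω a = r s a + γ * ∑ s', P s a s' * U ϑ ω s')
    (hU : ∀ ϑ ω s', U ϑ ω s' =
      (1 - β ϑ ω s') * Q ϑ s' ω + β ϑ ω s' * ∑ ω', πΩ s' ω' * Q ϑ s' ω')
    -- the k-step shifted discounted augmented transition kernel at `ϑ₀`
    (Pk : ℕ → (S × O) → (S × O) → ℝ)
    (hPk0 : ∀ x y, Pk 0 x y = if x = y then 1 else 0)
    (hPkS : ∀ k x y, Pk (k + 1) x y = ∑ z : S × O,
      (((1 - β ϑ₀ x.2 x.1) * (if z.2 = x.2 then 1 else 0) + β ϑ₀ x.2 x.1 * πΩ x.1 z.2) *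
        ∑ a, π z.2 x.1 a * (γ * P x.1 a z.1)) * Pk k z y)
    (hβdiff : ∀ ω s, DifferentiableAt ℝ (fun ϑ => β ϑ ω s) ϑ₀)
    (s₁ : S) (ω₀ : O) :
    HasFDerivAt (fun ϑ => U ϑ ω₀ s₁)
      (-∑ s', ∑ ω, (∑' k, Pk k (s₁, ω₀) (s', ω)) •
        ((Q ϑ₀ s' ω - ∑ ω', πΩ s' ω' * Q ϑ₀ s' ω') •
          fderiv ℝ (fun ϑ => β ϑ ω s') ϑ₀)) ϑ₀ := by
  classical
  -- Q expansion
  have hQexp : ∀ ϑ s ω, Q ϑ s ω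
      = (∑ a, π ω s a * r s a) + ∑ s'', (∑ a, π ω s a * (γ * P s a s'')) * U ϑ ω s'' := by
    intro ϑ s ω
    rw [hQ]
    simp_rw [hQU, mul_add, Finset.sum_add_distrib]
    congr 1
    simp_rw [Finset.mul_sum, Finset.sum_mul]
    rw [Finset.sum_comm]
    exact Finset.sum_congr rfl fun a _ => Finset.sum_congr rfl fun s'' _ => by ring
  -- applying the kernel to a function
  have hMapply : ∀ ϑ (x : S × O) (g : O → S → ℝ),
      ∑ z : S × O,
        (((1 - β ϑ x.2 x.1) * (if z.2 = x.2 then 1 else 0) + β ϑ x.2 x.1 * πΩ x.1 z.2) *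
          ∑ a, π z.2 x.1 a * (γ * P x.1 a z.1)) * g z.2 z.1
      = (1 - β ϑ x.2 x.1) * (∑ s'', (∑ a, π x.2 x.1 a * (γ * P x.1 a s'')) * g x.2 s'')
        + β ϑ x.2 x.1 * ∑ ω', πΩ x.1 ω' *
            ∑ s'', (∑ a, π ω' x.1 a * (γ * P x.1 a s'')) * g ω' s'' := by
    intro ϑ x g
    rw [Fintype.sum_prod_type_right]
    simp only [add_mul, mul_assoc, Finset.sum_add_distrib]
    congr 1
    · have h1 : ∀ ω' : O, ∑ s'' : S,
          (1 - β ϑ x.2 x.1) * ((if ω' = x.2 then 1 else 0) *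
            ((∑ a, π ω' x.1 a * (γ * P x.1 a s'')) * g ω' s''))
          = if ω' = x.2 then (1 - β ϑ x.2 x.1) *
              ∑ s'', (∑ a, π ω' x.1 a * (γ * P x.1 a s'')) * g ω' s'' else 0 := by
        intro ω'
        by_cases h : ω' = x.2 <;> simp [h, Finset.mul_sum]
      simp_rw [h1]
      rw [Finset.sum_ite_eq' Finset.univ x.2]
      simp
    · simp_rw [Finset.mul_sum]
  -- row sums of the kernel
  have hΓ1 : ∀ (ω' : O) (s : S), ∑ s'', ∑ a, π ω' s a * (γ * P s a s'') = γ := by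
    intro ω' s
    rw [Finset.sum_comm]
    have h1 : ∀ a, ∑ s'', π ω' s a * (γ * P s a s'') = π ω' s a * γ := by
      intro a
      rw [← Finset.mul_sum, ← Finset.mul_sum, hP1]
      ring
    simp_rw [h1]
    rw [← Finset.sum_mul, hπ1, one_mul]
  have hMrow : ∀ ϑ (x : S × O), ∑ z : S × O,
      |(((1 - β ϑ x.2 x.1) * (if z.2 = x.2 then 1 else 0) + β ϑ x.2 x.1 * πΩ x.1 z.2) *
        ∑ a, π z.2 x.1 a * (γ * P x.1 a z.1))| ≤ γ := by
    intro ϑ x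
    have hnn : ∀ z : S × O, 0 ≤
        (((1 - β ϑ x.2 x.1) * (if z.2 = x.2 then 1 else 0) + β ϑ x.2 x.1 * πΩ x.1 z.2) *
          ∑ a, π z.2 x.1 a * (γ * P x.1 a z.1)) := by
      intro z
      refine mul_nonneg (add_nonneg (mul_nonneg (by linarith [hβ1 ϑ x.2 x.1])
        (by split <;> norm_num)) (mul_nonneg (hβ0 _ _ _) (hπΩ0 _ _))) ?_
      exact Finset.sum_nonneg fun a _ => mul_nonneg (hπ0 _ _ _) (mul_nonneg hγ0 (hP0 _ _ _))
    calc ∑ z : S × O, |(((1 - β ϑ x.2 x.1) * (if z.2 = x.2 then 1 else 0)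
            + β ϑ x.2 x.1 * πΩ x.1 z.2) * ∑ a, π z.2 x.1 a * (γ * P x.1 a z.1))|
        = ∑ z : S × O, (((1 - β ϑ x.2 x.1) * (if z.2 = x.2 then 1 else 0)
            + β ϑ x.2 x.1 * πΩ x.1 z.2) * ∑ a, π z.2 x.1 a * (γ * P x.1 a z.1))
            * (fun (_ : O) (_ : S) => (1:ℝ)) z.2 z.1 := by
          exact Finset.sum_congr rfl fun z _ => by
            rw [abs_of_nonneg (hnn z)]; simp
      _ = γ := by
          rw [hMapply ϑ x (fun _ _ => 1)]
          simp only [mul_one]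
          simp_rw [hΓ1]
          rw [← Finset.sum_mul, hπΩ1, one_mul]
          ring
      _ ≤ γ := le_rfl
  -- continuity of the kernel
  have hMcont : ∀ x z : S × O, ContinuousAt (fun ϑ =>
      (((1 - β ϑ x.2 x.1) * (if z.2 = x.2 then 1 else 0) + β ϑ x.2 x.1 * πΩ x.1 z.2) *
        ∑ a, π z.2 x.1 a * (γ * P x.1 a z.1))) ϑ₀ := by
    intro x z
    have hb : ContinuousAt (fun ϑ => β ϑ x.2 x.1) ϑ₀ := (hβdiff x.2 x.1).continuousAt
    exact (((continuousAt_const.sub hb).mul continuousAt_const).add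
      (hb.mul continuousAt_const)).mul continuousAt_const
  -- the fixed-point recursion for differences
  have hΓd : ∀ ϑ (s : S) (ω : O),
      ∑ s'', (∑ a, π ω s a * (γ * P s a s'')) * (U ϑ ω s'' - U ϑ₀ ω s'')
      = Q ϑ s ω - Q ϑ₀ s ω := by
    intro ϑ s ω
    simp_rw [mul_sub]
    rw [Finset.sum_sub_distrib, hQexp ϑ s ω, hQexp ϑ₀ s ω]
    ring
  have hrec : ∀ ϑ (x : S × O),
      U ϑ x.2 x.1 - U ϑ₀ x.2 x.1
      = (β ϑ x.2 x.1 - β ϑ₀ x.2 x.1) * ((∑ ω', πΩ x.1 ω' * Q ϑ₀ x.1 ω') - Q ϑ₀ x.1 x.2)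
        + ∑ z : S × O,
          (((1 - β ϑ x.2 x.1) * (if z.2 = x.2 then 1 else 0) + β ϑ x.2 x.1 * πΩ x.1 z.2) *
            ∑ a, π z.2 x.1 a * (γ * P x.1 a z.1)) * (U ϑ z.2 z.1 - U ϑ₀ z.2 z.1) := by
    intro ϑ x
    rw [hMapply ϑ x (fun ω s => U ϑ ω s - U ϑ₀ ω s)]
    simp_rw [hΓd ϑ x.1]
    have hV : ∑ ω', πΩ x.1 ω' * (Q ϑ x.1 ω' - Q ϑ₀ x.1 ω')
        = (∑ ω', πΩ x.1 ω' * Q ϑ x.1 ω') - ∑ ω', πΩ x.1 ω' * Q ϑ₀ x.1 ω' := by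
      simp_rw [mul_sub]
      exact Finset.sum_sub_distrib _ _
    rw [hV, hU ϑ x.2 x.1, hU ϑ₀ x.2 x.1]
    ring
  -- derivative of the forcing term
  have hwD : ∀ x : S × O, HasFDerivAt
      (fun ϑ => (β ϑ x.2 x.1 - β ϑ₀ x.2 x.1) *
        ((∑ ω', πΩ x.1 ω' * Q ϑ₀ x.1 ω') - Q ϑ₀ x.1 x.2))
      (((∑ ω', πΩ x.1 ω' * Q ϑ₀ x.1 ω') - Q ϑ₀ x.1 x.2) •
        fderiv ℝ (fun ϑ => β ϑ x.2 x.1) ϑ₀) ϑ₀ := fun x =>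
    (((hβdiff x.2 x.1).hasFDerivAt).sub_const _).mul_const _
  -- apply the abstract theorem
  have main := neumann_grad (X := S × O) hγ0 hγ1
    (fun ϑ x z =>
      (((1 - β ϑ x.2 x.1) * (if z.2 = x.2 then 1 else 0) + β ϑ x.2 x.1 * πΩ x.1 z.2) *
        ∑ a, π z.2 x.1 a * (γ * P x.1 a z.1)))
    hMrow hMcont
    (fun ϑ x => U ϑ x.2 x.1)
    (fun ϑ x => (β ϑ x.2 x.1 - β ϑ₀ x.2 x.1) *
      ((∑ ω', πΩ x.1 ω' * Q ϑ₀ x.1 ω') - Q ϑ₀ x.1 x.2))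
    hrec
    (fun x => by simp)
    (fun x => ((∑ ω', πΩ x.1 ω' * Q ϑ₀ x.1 ω') - Q ϑ₀ x.1 x.2) •
      fderiv ℝ (fun ϑ => β ϑ x.2 x.1) ϑ₀)
    hwD Pk hPk0 hPkS (s₁, ω₀)
  have hL : (-∑ s', ∑ ω, (∑' k, Pk k (s₁, ω₀) (s', ω)) •
        ((Q ϑ₀ s' ω - ∑ ω', πΩ s' ω' * Q ϑ₀ s' ω') •
          fderiv ℝ (fun ϑ => β ϑ ω s') ϑ₀))
      = ∑ y : S × O, (∑' k, Pk k (s₁, ω₀) y) •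
          (((∑ ω', πΩ y.1 ω' * Q ϑ₀ y.1 ω') - Q ϑ₀ y.1 y.2) •
            fderiv ℝ (fun ϑ => β ϑ y.2 y.1) ϑ₀) := by
    rw [Fintype.sum_prod_type]
    rw [← Finset.sum_neg_distrib]
    refine Finset.sum_congr rfl fun s' _ => ?_
    rw [← Finset.sum_neg_distrib]
    refine Finset.sum_congr rfl fun ω _ => ?_
    rw [smul_smul, smul_smul]; refine (_root_.neg_smul _ _).symm.trans ?_
    congr 1
    ring
  rw [hL]
  exact main
end

section
/- One-step gradient recursion in the intra-option policy parameters: under the assumptions of the Intra-Option Policy Gradient Theorem, for every state-option pair (s, ω), ∂Q_Ω^θ(s,ω)/∂θ = ∑_a (∂π_{ω,θ}(a|s)/∂θ) Q_U^θ(s,ω,a) + ∑_{s'} ∑_{ω'} P_γ^{(1)}(s', ω' | s, ω) ∂Q_Ω^θ(s',ω')/∂θ. -/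
/-- **One-step gradient recursion in the intra-option policy parameters.** Under the
assumptions of the Intra-Option Policy Gradient Theorem, for every state-option pair
`(s, ω)`:
`∂Q_Ω(s,ω)/∂θ = ∑_a ∂π_{ω,θ}(a|s)/∂θ · Q_U(s,ω,a)
  + ∑_{s',ω'} P_γ^{(1)}(s',ω'|s,ω) ∂Q_Ω(s',ω')/∂θ`. -/
theorem intra_option_gradient_one_step_recursion
    {S A O : Type*} [Fintype S] [Fintype A] [Fintype O]
    [DecidableEq S] [DecidableEq O]
    {d : ℕ} (θ₀ : Fin d → ℝ)
    (P : S → A → S → ℝ) (r : S → A → ℝ) (γ : ℝ)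
    (hP0 : ∀ s a s', 0 ≤ P s a s') (hP1 : ∀ s a, ∑ s', P s a s' = 1)
    (hγ0 : 0 ≤ γ) (hγ1 : γ < 1)
    (π : (Fin d → ℝ) → O → S → A → ℝ)
    (hπ0 : ∀ θ ω s a, 0 ≤ π θ ω s a) (hπ1 : ∀ θ ω s, ∑ a, π θ ω s a = 1)
    (β : O → S → ℝ) (hβ0 : ∀ ω s, 0 ≤ β ω s) (hβ1 : ∀ ω s, β ω s ≤ 1)
    (πΩ : S → O → ℝ) (hπΩ0 : ∀ s ω, 0 ≤ πΩ s ω) (hπΩ1 : ∀ s, ∑ ω, πΩ s ω = 1)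
    (Q : (Fin d → ℝ) → S → O → ℝ) (U : (Fin d → ℝ) → O → S → ℝ)
    (QU : (Fin d → ℝ) → S → O → A → ℝ)
    (hQ : ∀ θ s ω, Q θ s ω = ∑ a, π θ ω s a * QU θ s ω a)
    (hQU : ∀ θ s ω a, QU θ s ω a = r s a + γ * ∑ s', P s a s' * U θ ω s')
    (hU : ∀ θ ω s', U θ ω s' =
      (1 - β ω s') * Q θ s' ω + β ω s' * ∑ ω', πΩ s' ω' * Q θ s' ω')
    (hπdiff : ∀ ω s a, Differentiable ℝ (fun θ => π θ ω s a))
    (hQdiff : ∀ s ω, Differentiable ℝ (fun θ => Q θ s ω))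
    (s : S) (ω : O) :
    fderiv ℝ (fun θ => Q θ s ω) θ₀ =
      (∑ a, QU θ₀ s ω a • fderiv ℝ (fun θ => π θ ω s a) θ₀)
      + ∑ s', ∑ ω',
        (∑ a, π θ₀ ω s a * (γ * P s a s') *
          ((1 - β ω s') * (if ω' = ω then 1 else 0) + β ω s' * πΩ s' ω')) •
          fderiv ℝ (fun θ => Q θ s' ω') θ₀ := by

  classical
  set D : S → O → (Fin d → ℝ) →L[ℝ] ℝ := fun s' ω' => fderiv ℝ (fun θ => Q θ s' ω') θ₀ with hD
  have hQhas : ∀ s' ω', HasFDerivAt (fun θ => Q θ s' ω') (D s' ω') θ₀ :=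
    fun s' ω' => ((hQdiff s' ω') θ₀).hasFDerivAt
  have hUhas : ∀ (ω1 : O) (s' : S), HasFDerivAt (fun θ => U θ ω1 s')
      ((1 - β ω1 s') • D s' ω1 + β ω1 s' • ∑ ω', πΩ s' ω' • D s' ω') θ₀ := by
    intro ω1 s'
    have h : (fun θ => U θ ω1 s')
        = fun θ => (1 - β ω1 s') * Q θ s' ω1 + β ω1 s' * ∑ ω', πΩ s' ω' * Q θ s' ω' :=
      funext fun θ => hU θ ω1 s'
    rw [h]
    exact ((hQhas s' ω1).const_mul _).add
      ((HasFDerivAt.fun_sum fun ω' _ => (hQhas s' ω').const_mul (πΩ s' ω')).const_mul _)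
  have hQUhas : ∀ a, HasFDerivAt (fun θ => QU θ s ω a)
      (γ • ∑ s', P s a s' • ((1 - β ω s') • D s' ω + β ω s' • ∑ ω', πΩ s' ω' • D s' ω')) θ₀ := by
    intro a
    have h : (fun θ => QU θ s ω a) = fun θ => r s a + γ * ∑ s', P s a s' * U θ ω s' :=
      funext fun θ => hQU θ s ω a
    rw [h]
    exact ((HasFDerivAt.fun_sum fun s' _ => (hUhas ω s').const_mul (P s a s')).const_mul γ).const_add _
  have hπhas : ∀ a, HasFDerivAt (fun θ => π θ ω s a) (fderiv ℝ (fun θ => π θ ω s a) θ₀) θ₀ :=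
    fun a => ((hπdiff ω s a) θ₀).hasFDerivAt
  have hQhas' : HasFDerivAt (fun θ => Q θ s ω)
      (∑ a, (π θ₀ ω s a • (γ • ∑ s', P s a s' •
          ((1 - β ω s') • D s' ω + β ω s' • ∑ ω', πΩ s' ω' • D s' ω'))
        + QU θ₀ s ω a • fderiv ℝ (fun θ => π θ ω s a) θ₀)) θ₀ := by
    have h : (fun θ => Q θ s ω) = fun θ => ∑ a, π θ ω s a * QU θ s ω a :=
      funext fun θ => hQ θ s ω
    rw [h]
    exact HasFDerivAt.fun_sum fun a _ => (hπhas a).mul (hQUhas a)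
  rw [hQhas'.fderiv, Finset.sum_add_distrib, add_comm]
  congr 1
  have key : ∀ s' : S, (1 - β ω s') • D s' ω + β ω s' • ∑ ω', πΩ s' ω' • D s' ω'
      = ∑ ω', ((1 - β ω s') * (if ω' = ω then 1 else 0) + β ω s' * πΩ s' ω') • D s' ω' := by
    intro s'
    simp only [add_smul, Finset.sum_add_distrib, mul_ite, mul_one, mul_zero, ite_smul,
      zero_smul, Finset.sum_ite_eq', Finset.mem_univ, if_true, mul_smul, ← Finset.smul_sum]
  simp only [key]
  simp only [Finset.smul_sum, smul_smul, Finset.sum_smul]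
  rw [Finset.sum_comm]
  refine Finset.sum_congr rfl fun s' _ => ?_
  rw [Finset.sum_comm]
  refine Finset.sum_congr rfl fun ω' _ => Finset.sum_congr rfl fun a _ => ?_
  congr 1
  ring
end

section
/- Series expansion of the intra-option policy gradient: under the assumptions of the Intra-Option Policy Gradient Theorem, for every state-option pair (s, ω), ∂Q_Ω^θ(s,ω)/∂θ = ∑_{k=0}^∞ ∑_{s',ω'} P_γ^{(k)}(s', ω' | s, ω) ∑_a (∂π_{ω',θ}(a|s')/∂θ) Q_U^θ(s', ω', a), where the series converges absolutely. -/
open Finset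

theorem differentiableAt_det_comp' {n : Type*} [Fintype n] [DecidableEq n] {d : ℕ}
    (F : (Fin d → ℝ) → Matrix n n ℝ) (θ₀ : Fin d → ℝ)
    (h : ∀ i j, DifferentiableAt ℝ (fun θ => F θ i j) θ₀) :
    DifferentiableAt ℝ (fun θ => (F θ).det) θ₀ := by
  have e : (fun θ => (F θ).det)
      = fun θ => ∑ σ : Equiv.Perm n, (Equiv.Perm.sign σ : ℝ) * ∏ i, F θ (σ i) i := by
    funext θ; rw [Matrix.det_apply']
  rw [e]
  exact DifferentiableAt.fun_sum fun σ _ =>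
    ((HasFDerivAt.finset_prod (fun i _ => (h (σ i) i).hasFDerivAt)).differentiableAt).const_mul _

theorem differentiableAt_matrix_inv_apply {n : Type*} [Fintype n] [DecidableEq n] {d : ℕ}
    (F : (Fin d → ℝ) → Matrix n n ℝ) (θ₀ : Fin d → ℝ)
    (h : ∀ i j, DifferentiableAt ℝ (fun θ => F θ i j) θ₀)
    (hdet : (F θ₀).det ≠ 0) (i j : n) :
    DifferentiableAt ℝ (fun θ => (F θ)⁻¹ i j) θ₀ := by
  have e : (fun θ => (F θ)⁻¹ i j)
      = fun θ => ((F θ).det)⁻¹ * ((F θ).updateRow j (Pi.single i 1)).det := by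
    funext θ
    rw [Matrix.inv_def, Matrix.smul_apply, Matrix.adjugate_apply, Ring.inverse_eq_inv',
      smul_eq_mul]
  rw [e]
  have hadj : DifferentiableAt ℝ (fun θ => ((F θ).updateRow j (Pi.single i 1)).det) θ₀ := by
    apply differentiableAt_det_comp'
    intro i' j'
    by_cases hij : i' = j
    · simp only [Matrix.updateRow_apply, hij, if_pos rfl]
      exact differentiableAt_const _
    · simp only [Matrix.updateRow_apply, if_neg hij]
      exact h i' j'
  exact ((differentiableAt_det_comp' F θ₀ h).inv hdet).mul hadj

theorem det_one_sub_ne_zero {X : Type*} [Fintype X] [DecidableEq X]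
    (M : Matrix X X ℝ) (γ : ℝ) (hγ0 : 0 ≤ γ) (hγ1 : γ < 1)
    (hM0 : ∀ x z, 0 ≤ M x z) (hMrow : ∀ x, ∑ z, M x z = γ) :
    (1 - M).det ≠ 0 := by
  intro h0
  obtain ⟨v, hv, hmv⟩ := Matrix.exists_mulVec_eq_zero_iff.mpr h0
  have hfix : ∀ x, v x = ∑ z, M x z * v z := by
    intro x
    have := congrFun hmv x
    simp only [Matrix.mulVec, dotProduct, Matrix.sub_apply, Matrix.one_apply,
      Pi.zero_apply, sub_mul, ite_mul, one_mul, zero_mul, Finset.sum_sub_distrib,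
      Finset.sum_ite_eq, Finset.mem_univ, if_true] at this
    linarith
  obtain ⟨x, hx⟩ := Function.ne_iff.mp hv
  obtain ⟨x₀, -, hx₀⟩ := Finset.exists_max_image Finset.univ (fun x => |v x|)
    ⟨x, Finset.mem_univ x⟩
  have hpos : 0 < |v x₀| := lt_of_lt_of_le (abs_pos.mpr hx) (hx₀ x (Finset.mem_univ x))
  have hle : |v x₀| ≤ γ * |v x₀| := by
    calc |v x₀| = |∑ z, M x₀ z * v z| := by rw [← hfix]
    _ ≤ ∑ z, |M x₀ z * v z| := Finset.abs_sum_le_sum_abs _ _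
    _ = ∑ z, M x₀ z * |v z| := by
        refine Finset.sum_congr rfl fun z _ => ?_
        rw [abs_mul, abs_of_nonneg (hM0 x₀ z)]
    _ ≤ ∑ z, M x₀ z * |v x₀| := by
        refine Finset.sum_le_sum fun z _ => ?_
        exact mul_le_mul_of_nonneg_left (hx₀ z (Finset.mem_univ z)) (hM0 x₀ z)
    _ = γ * |v x₀| := by rw [← Finset.sum_mul, hMrow]
  nlinarith

/-- Neumann series unrolling for the gradient recursion. -/
theorem neumann_unroll {X V : Type*} [Fintype X] [DecidableEq X]
    [NormedAddCommGroup V] [NormedSpace ℝ V] [CompleteSpace V]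
    (M : Matrix X X ℝ) (γ : ℝ) (hγ0 : 0 ≤ γ) (hγ1 : γ < 1)
    (hM0 : ∀ x z, 0 ≤ M x z) (hMrow : ∀ x, ∑ z, M x z = γ)
    (D g : X → V) (hrec : ∀ x, D x = g x + ∑ z, M x z • D z) (x : X) :
    Summable (fun k => ‖∑ z, (M ^ k) x z • g z‖) ∧
    D x = ∑' k, ∑ z, (M ^ k) x z • g z := by
  have hpow0 : ∀ k x z, 0 ≤ (M ^ k) x z := by
    intro k
    induction k with
    | zero => intro x z; simp [Matrix.one_apply]; split <;> norm_num
    | succ k ih =>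
        intro x z
        rw [pow_succ, Matrix.mul_apply]
        exact Finset.sum_nonneg fun w _ => mul_nonneg (ih x w) (hM0 w z)
  have hprow : ∀ k x, ∑ z, (M ^ k) x z = γ ^ k := by
    intro k
    induction k with
    | zero => intro x; simp [Matrix.one_apply]
    | succ k ih =>
        intro x
        rw [pow_succ]
        calc ∑ z, (M ^ k * M) x z = ∑ z, ∑ w, (M ^ k) x w * M w z := by
              refine Finset.sum_congr rfl fun z _ => ?_; rw [Matrix.mul_apply]
        _ = ∑ w, (M ^ k) x w * ∑ z, M w z := by
              rw [Finset.sum_comm]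
              exact Finset.sum_congr rfl fun w _ => (Finset.mul_sum _ _ _).symm
        _ = γ ^ k * γ := by
              simp_rw [hMrow]
              rw [← Finset.sum_mul, ih]
  have hentry : ∀ k x z, (M ^ k) x z ≤ γ ^ k := by
    intro k x z
    rw [← hprow k x]
    exact Finset.single_le_sum (fun w _ => hpow0 k x w) (Finset.mem_univ z)
  have hub : ∀ (h : X → V) k x, ‖∑ z, (M ^ k) x z • h z‖ ≤ γ ^ k * ∑ z, ‖h z‖ := by
    intro h k x
    calc ‖∑ z, (M ^ k) x z • h z‖ ≤ ∑ z, ‖(M ^ k) x z • h z‖ := norm_sum_le _ _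
    _ ≤ ∑ z, γ ^ k * ‖h z‖ := by
        refine Finset.sum_le_sum fun z _ => ?_
        rw [norm_smul, Real.norm_eq_abs, abs_of_nonneg (hpow0 k x z)]
        exact mul_le_mul_of_nonneg_right (hentry k x z) (norm_nonneg _)
    _ = γ ^ k * ∑ z, ‖h z‖ := (Finset.mul_sum _ _ _).symm
  have hsumnorm : Summable (fun k => ‖∑ z, (M ^ k) x z • g z‖) := by
    refine Summable.of_nonneg_of_le (fun k => norm_nonneg _) (fun k => hub g k x) ?_
    exact (summable_geometric_of_lt_one hγ0 hγ1).mul_right _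
  refine ⟨hsumnorm, ?_⟩
  have hsum : Summable (fun k => ∑ z, (M ^ k) x z • g z) := Summable.of_norm hsumnorm
  have hunroll : ∀ n x, D x
      = (∑ k ∈ Finset.range n, ∑ z, (M ^ k) x z • g z) + ∑ z, (M ^ n) x z • D z := by
    intro n
    induction n with
    | zero =>
        intro x
        simp [Matrix.one_apply, ite_smul]
    | succ n ih =>
        intro x
        have key : ∑ z, (M ^ n) x z • D z
            = (∑ z, (M ^ n) x z • g z) + ∑ z, (M ^ (n+1)) x z • D z := by
          calc ∑ z, (M ^ n) x z • D z
              = ∑ z, (M ^ n) x z • (g z + ∑ w, M z w • D w) :=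
                Finset.sum_congr rfl fun z _ => by rw [← hrec z]
          _ = (∑ z, (M ^ n) x z • g z) + ∑ z, (M ^ n) x z • ∑ w, M z w • D w := by
                simp [smul_add, Finset.sum_add_distrib]
          _ = (∑ z, (M ^ n) x z • g z) + ∑ w, (∑ z, (M ^ n) x z * M z w) • D w := by
                congr 1
                calc ∑ z, (M ^ n) x z • ∑ w, M z w • D w
                    = ∑ z, ∑ w, ((M ^ n) x z * M z w) • D w := by
                      simp_rw [Finset.smul_sum, smul_smul]
                _ = ∑ w, ∑ z, ((M ^ n) x z * M z w) • D w := Finset.sum_comm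
                _ = ∑ w, (∑ z, (M ^ n) x z * M z w) • D w := by
                      simp_rw [Finset.sum_smul]
          _ = (∑ z, (M ^ n) x z • g z) + ∑ w, (M ^ (n+1)) x w • D w := by
                have hw : ∀ w, (∑ z, (M ^ n) x z * M z w) = (M ^ (n+1)) x w := fun w => by
                  rw [pow_succ, Matrix.mul_apply]
                simp_rw [hw]
        rw [Finset.sum_range_succ, ih x, key]
        abel
  have hpart := hsum.hasSum.tendsto_sum_nat
  have htail : Filter.Tendsto (fun n => ∑ z, (M ^ n) x z • D z) Filter.atTop (nhds 0) := by
    refine squeeze_zero_norm (fun n => hub D n x) ?_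
    simpa using (tendsto_pow_atTop_nhds_zero_of_lt_one hγ0 hγ1).mul_const (∑ z, ‖D z‖)
  have hpart2 : Filter.Tendsto (fun n => ∑ k ∈ Finset.range n, ∑ z, (M ^ k) x z • g z)
      Filter.atTop (nhds (D x)) := by
    have he : (fun n => ∑ k ∈ Finset.range n, ∑ z, (M ^ k) x z • g z)
        = fun n => D x - ∑ z, (M ^ n) x z • D z := funext fun n => by rw [hunroll n x]; abel
    rw [he]
    have h2 := Filter.Tendsto.sub
      (tendsto_const_nhds : Filter.Tendsto (fun _ : ℕ => D x) Filter.atTop (nhds (D x))) htail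
    simpa using h2
  exact tendsto_nhds_unique hpart2 hpart

set_option maxHeartbeats 1000000 in
/-- **Series expansion of the intra-option policy gradient.** Under the assumptions of
the Intra-Option Policy Gradient Theorem, for every state-option pair `(s, ω)`:
`∂Q_Ω(s,ω)/∂θ = ∑_{k=0}^∞ ∑_{s',ω'} P_γ^{(k)}(s',ω'|s,ω) ∑_a ∂π_{ω',θ}(a|s')/∂θ · Q_U(s',ω',a)`,
where the series converges absolutely. -/
theorem intra_option_gradient_series_expansion
    {S A O : Type*} [Fintype S] [Fintype A] [Fintype O]
    [DecidableEq S] [DecidableEq O]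
    {d : ℕ} (θ₀ : Fin d → ℝ)
    (P : S → A → S → ℝ) (r : S → A → ℝ) (γ : ℝ)
    (hP0 : ∀ s a s', 0 ≤ P s a s') (hP1 : ∀ s a, ∑ s', P s a s' = 1)
    (hγ0 : 0 ≤ γ) (hγ1 : γ < 1)
    (π : (Fin d → ℝ) → O → S → A → ℝ)
    (hπ0 : ∀ θ ω s a, 0 ≤ π θ ω s a) (hπ1 : ∀ θ ω s, ∑ a, π θ ω s a = 1)
    (β : O → S → ℝ) (hβ0 : ∀ ω s, 0 ≤ β ω s) (hβ1 : ∀ ω s, β ω s ≤ 1)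
    (πΩ : S → O → ℝ) (hπΩ0 : ∀ s ω, 0 ≤ πΩ s ω) (hπΩ1 : ∀ s, ∑ ω, πΩ s ω = 1)
    (Q : (Fin d → ℝ) → S → O → ℝ) (U : (Fin d → ℝ) → O → S → ℝ)
    (QU : (Fin d → ℝ) → S → O → A → ℝ)
    (hQ : ∀ θ s ω, Q θ s ω = ∑ a, π θ ω s a * QU θ s ω a)
    (hQU : ∀ θ s ω a, QU θ s ω a = r s a + γ * ∑ s', P s a s' * U θ ω s')
    (hU : ∀ θ ω s', U θ ω s' =
      (1 - β ω s') * Q θ s' ω + β ω s' * ∑ ω', πΩ s' ω' * Q θ s' ω')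
    -- the k-step discounted augmented transition kernel at `θ₀`
    (Pk : ℕ → (S × O) → (S × O) → ℝ)
    (hPk0 : ∀ x y, Pk 0 x y = if x = y then 1 else 0)
    (hPkS : ∀ k x y, Pk (k + 1) x y = ∑ z : S × O,
      (∑ a, π θ₀ x.2 x.1 a * (γ * P x.1 a z.1) *
        ((1 - β x.2 z.1) * (if z.2 = x.2 then 1 else 0) + β x.2 z.1 * πΩ z.1 z.2))
        * Pk k z y)
    (hπdiff : ∀ ω s a, Differentiable ℝ (fun θ => π θ ω s a))
    (s : S) (ω : O) :
    Summable (fun k => ‖∑ s', ∑ ω', Pk k (s, ω) (s', ω') •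
      ∑ a, QU θ₀ s' ω' a • fderiv ℝ (fun θ => π θ ω' s' a) θ₀‖) ∧
    fderiv ℝ (fun θ => Q θ s ω) θ₀ =
      ∑' k, ∑ s', ∑ ω', Pk k (s, ω) (s', ω') •
        ∑ a, QU θ₀ s' ω' a • fderiv ℝ (fun θ => π θ ω' s' a) θ₀ := by
  classical
  set κ : S × O → A → S × O → ℝ := fun x a z =>
    (γ * P x.1 a z.1) * ((1 - β x.2 z.1) * (if z.2 = x.2 then 1 else 0)
      + β x.2 z.1 * πΩ z.1 z.2) with hκdef
  set Mf : (Fin d → ℝ) → Matrix (S × O) (S × O) ℝ := fun θ =>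
    Matrix.of fun x z => ∑ a, π θ x.2 x.1 a * κ x a z with hMdef
  -- nonnegativity of κ
  have hκ0 : ∀ x a z, 0 ≤ κ x a z := by
    intro x a z
    rw [hκdef]
    refine mul_nonneg (mul_nonneg hγ0 (hP0 _ _ _)) (add_nonneg (mul_nonneg ?_ ?_)
      (mul_nonneg (hβ0 _ _) (hπΩ0 _ _)))
    · linarith [hβ1 x.2 z.1]
    · split <;> norm_num
  -- row sums of κ
  have hκrow : ∀ x a, ∑ z : S × O, κ x a z = γ := by
    intro x a
    rw [hκdef, Fintype.sum_prod_type]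
    have hinner : ∀ s', ∑ ω', (γ * P x.1 a s') * ((1 - β x.2 s') * (if ω' = x.2 then 1 else 0)
        + β x.2 s' * πΩ s' ω') = γ * P x.1 a s' := by
      intro s'
      rw [← Finset.mul_sum]
      have : ∑ ω', ((1 - β x.2 s') * (if ω' = x.2 then 1 else 0) + β x.2 s' * πΩ s' ω') = 1 := by
        rw [Finset.sum_add_distrib]
        simp only [← Finset.mul_sum, Finset.sum_ite_eq', Finset.mem_univ, if_true, hπΩ1 s']
        ring
      rw [this, mul_one]
    simp only [hinner]
    rw [← Finset.mul_sum, hP1, mul_one]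
  -- key contraction identity
  have hkey : ∀ θ (x : S × O) (a : A),
      ∑ z : S × O, κ x a z * Q θ z.1 z.2 = γ * ∑ s', P x.1 a s' * U θ x.2 s' := by
    intro θ x a
    rw [hκdef, Fintype.sum_prod_type, Finset.mul_sum]
    refine Finset.sum_congr rfl fun s' _ => ?_
    rw [hU θ x.2 s']
    simp only [add_mul, mul_add, ite_mul, one_mul, zero_mul, mul_ite, mul_zero,
      Finset.sum_add_distrib, Finset.sum_ite_eq', Finset.mem_univ, if_true, Finset.mul_sum]
    ring_nf
  -- Bellman equation in matrix form
  have hBell : ∀ θ (x : S × O), Q θ x.1 x.2 =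
      (∑ a, π θ x.2 x.1 a * r x.1 a) + ∑ z : S × O, Mf θ x z * Q θ z.1 z.2 := by
    intro θ x
    have h1 : Q θ x.1 x.2
        = ∑ a, π θ x.2 x.1 a * (r x.1 a + ∑ z : S × O, κ x a z * Q θ z.1 z.2) := by
      rw [hQ]
      refine Finset.sum_congr rfl fun a _ => ?_
      rw [hQU, hkey]
    rw [h1]
    simp only [mul_add, Finset.sum_add_distrib]
    congr 1
    calc ∑ a, π θ x.2 x.1 a * ∑ z : S × O, κ x a z * Q θ z.1 z.2
        = ∑ a, ∑ z : S × O, π θ x.2 x.1 a * (κ x a z * Q θ z.1 z.2) := by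
          simp_rw [Finset.mul_sum]
      _ = ∑ z : S × O, ∑ a, π θ x.2 x.1 a * (κ x a z * Q θ z.1 z.2) := Finset.sum_comm
      _ = ∑ z : S × O, Mf θ x z * Q θ z.1 z.2 := by
          refine Finset.sum_congr rfl fun z _ => ?_
          rw [hMdef]
          simp only [Matrix.of_apply]
          rw [Finset.sum_mul]
          exact Finset.sum_congr rfl fun a _ => (mul_assoc _ _ _).symm
  -- matrix facts
  have hM0f : ∀ θ (x z : S × O), 0 ≤ Mf θ x z := by
    intro θ x z
    rw [hMdef]
    exact Finset.sum_nonneg fun a _ => mul_nonneg (hπ0 _ _ _ _) (hκ0 x a z)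
  have hMrow : ∀ θ (x : S × O), ∑ z : S × O, Mf θ x z = γ := by
    intro θ x
    rw [hMdef]
    simp only [Matrix.of_apply]
    rw [Finset.sum_comm]
    simp_rw [← Finset.mul_sum, hκrow]
    rw [← Finset.sum_mul, hπ1, one_mul]
  have hdet : ∀ θ, ((1 : Matrix (S × O) (S × O) ℝ) - Mf θ).det ≠ 0 := fun θ =>
    det_one_sub_ne_zero (Mf θ) γ hγ0 hγ1 (hM0f θ) (hMrow θ)
  have hMdiffAll : ∀ (θ : Fin d → ℝ) (x z : S × O),
      DifferentiableAt ℝ (fun θ' => Mf θ' x z) θ := by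
    intro θ x z
    rw [hMdef]
    exact DifferentiableAt.fun_sum fun a _ => ((hπdiff x.2 x.1 a) θ).mul_const _
  -- differentiability of Q at θ₀
  have hQform : ∀ θ (x : S × O), Q θ x.1 x.2
      = ∑ z : S × O, ((1 : Matrix (S × O) (S × O) ℝ) - Mf θ)⁻¹ x z
          * (∑ a, π θ z.2 z.1 a * r z.1 a) := by
    intro θ x
    have hAq : ((1 : Matrix (S × O) (S × O) ℝ) - Mf θ).mulVec (fun z : S × O => Q θ z.1 z.2)
        = fun z : S × O => ∑ a, π θ z.2 z.1 a * r z.1 a := by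
      funext y
      simp only [Matrix.sub_mulVec, Matrix.one_mulVec, Pi.sub_apply]
      have hmv : (Mf θ |>.mulVec fun z : S × O => Q θ z.1 z.2) y
          = ∑ z : S × O, Mf θ y z * Q θ z.1 z.2 := by
        simp [Matrix.mulVec, dotProduct]
      rw [hmv]
      have := hBell θ y
      linarith
    have hqe : (fun z : S × O => Q θ z.1 z.2)
        = Matrix.mulVec ((1 : Matrix (S × O) (S × O) ℝ) - Mf θ)⁻¹
            (fun z : S × O => ∑ a, π θ z.2 z.1 a * r z.1 a) := by
      rw [← hAq, Matrix.mulVec_mulVec,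
        Matrix.nonsing_inv_mul _ (isUnit_iff_ne_zero.mpr (hdet θ)), Matrix.one_mulVec]
    have := congrFun hqe x
    simpa [Matrix.mulVec, dotProduct] using this
  have hQdiff : ∀ (x : S × O), DifferentiableAt ℝ (fun θ => Q θ x.1 x.2) θ₀ := by
    intro x
    have he : (fun θ => Q θ x.1 x.2) = fun θ =>
        ∑ z : S × O, ((1 : Matrix (S × O) (S × O) ℝ) - Mf θ)⁻¹ x z
          * (∑ a, π θ z.2 z.1 a * r z.1 a) := funext fun θ => hQform θ x
    rw [he]
    refine DifferentiableAt.fun_sum fun z _ => DifferentiableAt.mul ?_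
      (DifferentiableAt.fun_sum fun a _ => ((hπdiff z.2 z.1 a) θ₀).mul_const _)
    refine differentiableAt_matrix_inv_apply _ _ ?_ (hdet θ₀) x z
    intro i j
    have hij : (fun θ => ((1 : Matrix (S × O) (S × O) ℝ) - Mf θ) i j)
        = fun θ => (if i = j then (1 : ℝ) else 0) - Mf θ i j := by
      funext θ; simp [Matrix.sub_apply, Matrix.one_apply]
    rw [hij]
    exact (differentiableAt_const _).sub (hMdiffAll θ₀ i j)
  -- the gradient recursion
  set D := fun x : S × O => fderiv ℝ (fun θ => Q θ x.1 x.2) θ₀ with hDdef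
  set g := fun x : S × O => ∑ a, QU θ₀ x.1 x.2 a
      • fderiv ℝ (fun θ => π θ x.2 x.1 a) θ₀ with hgdef
  have hrec : ∀ x : S × O, D x = g x + ∑ z : S × O, Mf θ₀ x z • D z := by
    intro x
    have hfe : (fun θ => Q θ x.1 x.2)
        = fun θ => (∑ a, π θ x.2 x.1 a * r x.1 a) + ∑ z : S × O, Mf θ x z * Q θ z.1 z.2 :=
      funext fun θ => hBell θ x
    have hd1 : DifferentiableAt ℝ (fun θ => ∑ a, π θ x.2 x.1 a * r x.1 a) θ₀ :=
      DifferentiableAt.fun_sum fun a _ => ((hπdiff x.2 x.1 a) θ₀).mul_const _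
    have hd2 : ∀ z : S × O, DifferentiableAt ℝ (fun θ => Mf θ x z * Q θ z.1 z.2) θ₀ :=
      fun z => (hMdiffAll θ₀ x z).mul (hQdiff z)
    have hstep : D x = fderiv ℝ (fun θ => ∑ a, π θ x.2 x.1 a * r x.1 a) θ₀
        + ∑ z : S × O, fderiv ℝ (fun θ => Mf θ x z * Q θ z.1 z.2) θ₀ := by
      rw [hDdef]
      show fderiv ℝ (fun θ => Q θ x.1 x.2) θ₀ = _
      rw [hfe, fderiv_fun_add hd1 (DifferentiableAt.fun_sum fun z _ => hd2 z),
        fderiv_fun_sum fun z _ => hd2 z]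
    have hc : fderiv ℝ (fun θ => ∑ a, π θ x.2 x.1 a * r x.1 a) θ₀
        = ∑ a, r x.1 a • fderiv ℝ (fun θ => π θ x.2 x.1 a) θ₀ := by
      rw [fderiv_fun_sum fun a _ => ((hπdiff x.2 x.1 a) θ₀).mul_const _]
      exact Finset.sum_congr rfl fun a _ =>
        fderiv_mul_const ((hπdiff x.2 x.1 a) θ₀) _
    have hm : ∀ z : S × O, fderiv ℝ (fun θ => Mf θ x z) θ₀
        = ∑ a, κ x a z • fderiv ℝ (fun θ => π θ x.2 x.1 a) θ₀ := by
      intro z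
      have heq : (fun θ => Mf θ x z) = fun θ => ∑ a, π θ x.2 x.1 a * κ x a z := rfl
      rw [heq, fderiv_fun_sum fun a _ => ((hπdiff x.2 x.1 a) θ₀).mul_const _]
      exact Finset.sum_congr rfl fun a _ => fderiv_mul_const ((hπdiff x.2 x.1 a) θ₀) _
    have hprod : ∀ z : S × O, fderiv ℝ (fun θ => Mf θ x z * Q θ z.1 z.2) θ₀
        = Mf θ₀ x z • D z + Q θ₀ z.1 z.2 • fderiv ℝ (fun θ => Mf θ x z) θ₀ := by
      intro z
      exact fderiv_mul (hMdiffAll θ₀ x z) (hQdiff z)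
    rw [hstep, hc]
    simp only [hprod, hm, Finset.sum_add_distrib]
    have hg : g x = (∑ a, r x.1 a • fderiv ℝ (fun θ => π θ x.2 x.1 a) θ₀)
        + ∑ z : S × O, Q θ₀ z.1 z.2 • ∑ a, κ x a z • fderiv ℝ (fun θ => π θ x.2 x.1 a) θ₀ := by
      rw [hgdef]
      show (∑ a, QU θ₀ x.1 x.2 a • fderiv ℝ (fun θ => π θ x.2 x.1 a) θ₀) = _
      have hswap : ∑ z : S × O, Q θ₀ z.1 z.2
          • ∑ a, κ x a z • fderiv ℝ (fun θ => π θ x.2 x.1 a) θ₀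
          = ∑ a, (∑ z : S × O, κ x a z * Q θ₀ z.1 z.2)
              • fderiv ℝ (fun θ => π θ x.2 x.1 a) θ₀ := by
        calc ∑ z : S × O, Q θ₀ z.1 z.2 • ∑ a, κ x a z • fderiv ℝ (fun θ => π θ x.2 x.1 a) θ₀
            = ∑ z : S × O, ∑ a, (κ x a z * Q θ₀ z.1 z.2)
                • fderiv ℝ (fun θ => π θ x.2 x.1 a) θ₀ := by
              simp_rw [Finset.smul_sum, smul_smul, mul_comm]
          _ = ∑ a, ∑ z : S × O, (κ x a z * Q θ₀ z.1 z.2)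
                • fderiv ℝ (fun θ => π θ x.2 x.1 a) θ₀ := Finset.sum_comm
          _ = _ := by simp_rw [Finset.sum_smul]
      rw [hswap, ← Finset.sum_add_distrib]
      refine Finset.sum_congr rfl fun a _ => ?_
      rw [← add_smul, hQU, hkey]
    rw [hg]
    abel
  -- Pk equals powers of Mf θ₀
  have hPkpow : ∀ k (x y : S × O), Pk k x y = (Mf θ₀ ^ k) x y := by
    intro k
    induction k with
    | zero => intro x y; rw [hPk0, pow_zero, Matrix.one_apply]
    | succ k ih =>
        intro x y
        rw [hPkS]
        have hMform : ∀ z : S × O, (∑ a, π θ₀ x.2 x.1 a * (γ * P x.1 a z.1) *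
            ((1 - β x.2 z.1) * (if z.2 = x.2 then 1 else 0) + β x.2 z.1 * πΩ z.1 z.2))
            = Mf θ₀ x z := by
          intro z
          rw [hMdef]
          simp only [Matrix.of_apply, hκdef]
          exact Finset.sum_congr rfl fun a _ => mul_assoc _ _ _
        simp_rw [hMform, ih]
        rw [pow_succ', Matrix.mul_apply]
  -- apply the Neumann unrolling
  obtain ⟨hs, he⟩ := neumann_unroll (Mf θ₀) γ hγ0 hγ1 (hM0f θ₀) (hMrow θ₀) D g hrec (s, ω)
  have hconv : ∀ k, (∑ s', ∑ ω', Pk k (s, ω) (s', ω') •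
      ∑ a, QU θ₀ s' ω' a • fderiv ℝ (fun θ => π θ ω' s' a) θ₀)
      = ∑ z : S × O, (Mf θ₀ ^ k) (s, ω) z • g z := by
    intro k
    calc (∑ s', ∑ ω', Pk k (s, ω) (s', ω') •
        ∑ a, QU θ₀ s' ω' a • fderiv ℝ (fun θ => π θ ω' s' a) θ₀)
        = ∑ s', ∑ ω', (Mf θ₀ ^ k) (s, ω) (s', ω') • g (s', ω') := by
          refine Finset.sum_congr rfl fun s' _ => Finset.sum_congr rfl fun ω' _ => ?_
          rw [hPkpow k (s, ω) (s', ω'), hgdef]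
      _ = ∑ z : S × O, (Mf θ₀ ^ k) (s, ω) z • g z :=
        (Fintype.sum_prod_type (f := fun z : S × O => (Mf θ₀ ^ k) (s, ω) z • g z)).symm
  constructor
  · have : (fun k => ‖∑ s', ∑ ω', Pk k (s, ω) (s', ω') •
        ∑ a, QU θ₀ s' ω' a • fderiv ℝ (fun θ => π θ ω' s' a) θ₀‖)
        = fun k => ‖∑ z : S × O, (Mf θ₀ ^ k) (s, ω) z • g z‖ :=
      funext fun k => by rw [hconv k]
    rw [this]
    exact hs
  · have hD : fderiv ℝ (fun θ => Q θ s ω) θ₀ = D (s, ω) := rfl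
    rw [hD, he]
    exact tsum_congr fun k => (hconv k).symm
end

section
/- One-step gradient recursion for the value upon arrival in the termination parameters: under the assumptions of the Termination Gradient Theorem, for every option ω and state s', ∂U^ϑ(ω, s')/∂ϑ = −(∂β_{ω,ϑ}(s')/∂ϑ) A_Ω^ϑ(s', ω) + ∑_{ω'} ∑_{s''} P̃_γ^{(1)}(s'', ω' | s', ω) ∂U^ϑ(ω', s'')/∂ϑ, where A_Ω^ϑ(s', ω) = Q_Ω^ϑ(s', ω) − V_Ω^ϑ(s') is the advantage function over options. -/
set_option maxHeartbeats 1000000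


/-- **One-step gradient recursion for the value upon arrival in the termination
parameters.** Under the assumptions of the Termination Gradient Theorem, for every
option `ω` and state `s'`:
`∂U(ω,s')/∂ϑ = −(∂β_{ω,ϑ}(s')/∂ϑ) A_Ω(s',ω)
  + ∑_{ω',s''} P̃_γ^{(1)}(s'',ω'|s',ω) ∂U(ω',s'')/∂ϑ`,
where `A_Ω(s',ω) = Q_Ω(s',ω) − V_Ω(s')`. -/
theorem termination_gradient_one_step_recursion
    {S A O : Type*} [Fintype S] [Fintype A] [Fintype O]
    [DecidableEq S] [DecidableEq O]
    {m : ℕ} (ϑ₀ : Fin m → ℝ)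
    (P : S → A → S → ℝ) (r : S → A → ℝ) (γ : ℝ)
    (hP0 : ∀ s a s', 0 ≤ P s a s') (hP1 : ∀ s a, ∑ s', P s a s' = 1)
    (hγ0 : 0 ≤ γ) (hγ1 : γ < 1)
    (π : O → S → A → ℝ)
    (hπ0 : ∀ ω s a, 0 ≤ π ω s a) (hπ1 : ∀ ω s, ∑ a, π ω s a = 1)
    (β : (Fin m → ℝ) → O → S → ℝ)
    (hβ0 : ∀ ϑ ω s, 0 ≤ β ϑ ω s) (hβ1 : ∀ ϑ ω s, β ϑ ω s ≤ 1)
    (πΩ : S → O → ℝ) (hπΩ0 : ∀ s ω, 0 ≤ πΩ s ω) (hπΩ1 : ∀ s, ∑ ω, πΩ s ω = 1)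
    (Q : (Fin m → ℝ) → S → O → ℝ) (U : (Fin m → ℝ) → O → S → ℝ)
    (QU : (Fin m → ℝ) → S → O → A → ℝ)
    (hQ : ∀ ϑ s ω, Q ϑ s ω = ∑ a, π ω s a * QU ϑ s ω a)
    (hQU : ∀ ϑ s ω a, QU ϑ s ω a = r s a + γ * ∑ s', P s a s' * U ϑ ω s')
    (hU : ∀ ϑ ω s', U ϑ ω s' =
      (1 - β ϑ ω s') * Q ϑ s' ω + β ϑ ω s' * ∑ ω', πΩ s' ω' * Q ϑ s' ω')
    (hβdiff : ∀ ω s, Differentiable ℝ (fun ϑ => β ϑ ω s))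
    (hQdiff : ∀ s ω, Differentiable ℝ (fun ϑ => Q ϑ s ω))
    (hUdiff : ∀ ω s, Differentiable ℝ (fun ϑ => U ϑ ω s))
    (ω : O) (s' : S) :
    fderiv ℝ (fun ϑ => U ϑ ω s') ϑ₀ =
      -((Q ϑ₀ s' ω - ∑ ω', πΩ s' ω' * Q ϑ₀ s' ω') •
          fderiv ℝ (fun ϑ => β ϑ ω s') ϑ₀)
      + ∑ ω', ∑ s'',
        (((1 - β ϑ₀ ω s') * (if ω' = ω then 1 else 0) + β ϑ₀ ω s' * πΩ s' ω') *
          ∑ a, π ω' s' a * (γ * P s' a s'')) •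
          fderiv ℝ (fun ϑ => U ϑ ω' s'') ϑ₀ := by

  classical
  set Dβ := fderiv ℝ (fun ϑ => β ϑ ω s') ϑ₀ with hDβ
  -- derivative of Q
  have hDQ : ∀ (s : S) (ω' : O), fderiv ℝ (fun ϑ => Q ϑ s ω') ϑ₀ =
      ∑ s'', (∑ a, π ω' s a * (γ * P s a s'')) • fderiv ℝ (fun ϑ => U ϑ ω' s'') ϑ₀ := by
    intro s ω'
    have hfun : (fun ϑ => Q ϑ s ω') =
        (fun ϑ => ∑ a, π ω' s a * (r s a + γ * ∑ t, P s a t * U ϑ ω' t)) := by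
      funext ϑ; simp only [hQ, hQU]
    rw [hfun]
    have hsumdiff : ∀ (a : A), DifferentiableAt ℝ
        (fun ϑ => ∑ t, P s a t * U ϑ ω' t) ϑ₀ := by
      intro a
      exact DifferentiableAt.fun_sum fun t _ => ((hUdiff ω' t) ϑ₀).const_mul _
    rw [fderiv_fun_sum (fun a _ => by
      exact (((hsumdiff a).const_mul γ).const_add (r s a)).const_mul _)]
    have step : ∀ a : A, fderiv ℝ (fun ϑ => π ω' s a * (r s a + γ * ∑ t, P s a t * U ϑ ω' t)) ϑ₀
        = ∑ t, (π ω' s a * (γ * P s a t)) • fderiv ℝ (fun ϑ => U ϑ ω' t) ϑ₀ := by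
      intro a
      rw [fderiv_const_mul (((hsumdiff a).const_mul γ).const_add (r s a)),
        fderiv_const_add, fderiv_const_mul (hsumdiff a),
        fderiv_fun_sum (fun t _ => ((hUdiff ω' t) ϑ₀).const_mul _)]
      rw [Finset.smul_sum, Finset.smul_sum]
      refine Finset.sum_congr rfl fun t _ => ?_
      rw [fderiv_const_mul ((hUdiff ω' t) ϑ₀)]
      rw [smul_smul, smul_smul, mul_assoc]
    calc (∑ a, fderiv ℝ (fun ϑ => π ω' s a * (r s a + γ * ∑ t, P s a t * U ϑ ω' t)) ϑ₀)
        = ∑ a, ∑ t, (π ω' s a * (γ * P s a t)) • fderiv ℝ (fun ϑ => U ϑ ω' t) ϑ₀ := by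
          exact Finset.sum_congr rfl fun a _ => step a
      _ = ∑ t, (∑ a, π ω' s a * (γ * P s a t)) • fderiv ℝ (fun ϑ => U ϑ ω' t) ϑ₀ := by
          rw [Finset.sum_comm]
          exact Finset.sum_congr rfl fun t _ => (Finset.sum_smul).symm
  -- differentiability of V
  have hVdiff : Differentiable ℝ (fun ϑ => ∑ ω', πΩ s' ω' * Q ϑ s' ω') :=
    Differentiable.fun_sum fun ω' _ => (hQdiff s' ω').const_mul _
  -- derivative of V
  have hDV : fderiv ℝ (fun ϑ => ∑ ω', πΩ s' ω' * Q ϑ s' ω') ϑ₀ =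
      ∑ ω', πΩ s' ω' • fderiv ℝ (fun ϑ => Q ϑ s' ω') ϑ₀ := by
    rw [fderiv_fun_sum (fun ω' _ => ((hQdiff s' ω') ϑ₀).const_mul _)]
    exact Finset.sum_congr rfl fun ω' _ => fderiv_const_mul ((hQdiff s' ω') ϑ₀) _
  -- left-hand side via product rule
  have hfunU : (fun ϑ => U ϑ ω s') =
      (fun ϑ => (1 - β ϑ ω s') * Q ϑ s' ω + β ϑ ω s' * ∑ ω', πΩ s' ω' * Q ϑ s' ω') := by
    funext ϑ; exact hU ϑ ω s'
  have h1β : DifferentiableAt ℝ (fun ϑ => 1 - β ϑ ω s') ϑ₀ :=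
    (differentiableAt_const 1).sub ((hβdiff ω s') ϑ₀)
  have hLHS : fderiv ℝ (fun ϑ => U ϑ ω s') ϑ₀ =
      (1 - β ϑ₀ ω s') • fderiv ℝ (fun ϑ => Q ϑ s' ω) ϑ₀ + Q ϑ₀ s' ω • (-Dβ)
      + (β ϑ₀ ω s' • fderiv ℝ (fun ϑ => ∑ ω', πΩ s' ω' * Q ϑ s' ω') ϑ₀
        + (∑ ω', πΩ s' ω' * Q ϑ₀ s' ω') • Dβ) := by
    rw [hfunU, fderiv_fun_add (h1β.fun_mul ((hQdiff s' ω) ϑ₀))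
      (((hβdiff ω s') ϑ₀).fun_mul (hVdiff ϑ₀)),
      fderiv_fun_mul h1β ((hQdiff s' ω) ϑ₀),
      fderiv_fun_mul ((hβdiff ω s') ϑ₀) (hVdiff ϑ₀)]
    have : fderiv ℝ (fun ϑ => 1 - β ϑ ω s') ϑ₀ = -Dβ := by
      rw [hDβ]
      exact fderiv_const_sub 1
    rw [this]
  -- simplify the double sum on the RHS
  have hRHS : (∑ ω', ∑ s'',
        (((1 - β ϑ₀ ω s') * (if ω' = ω then 1 else 0) + β ϑ₀ ω s' * πΩ s' ω') *
          ∑ a, π ω' s' a * (γ * P s' a s'')) •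
          fderiv ℝ (fun ϑ => U ϑ ω' s'') ϑ₀)
      = (1 - β ϑ₀ ω s') • fderiv ℝ (fun ϑ => Q ϑ s' ω) ϑ₀
        + β ϑ₀ ω s' • fderiv ℝ (fun ϑ => ∑ ω', πΩ s' ω' * Q ϑ s' ω') ϑ₀ := by
    have split : ∀ (ω' : O) (s'' : S),
        (((1 - β ϑ₀ ω s') * (if ω' = ω then 1 else 0) + β ϑ₀ ω s' * πΩ s' ω') *
          ∑ a, π ω' s' a * (γ * P s' a s'')) •
          fderiv ℝ (fun ϑ => U ϑ ω' s'') ϑ₀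
        = (if ω' = ω then (1 - β ϑ₀ ω s') •
              ((∑ a, π ω' s' a * (γ * P s' a s'')) • fderiv ℝ (fun ϑ => U ϑ ω' s'') ϑ₀)
            else 0)
          + (β ϑ₀ ω s' * πΩ s' ω') •
              ((∑ a, π ω' s' a * (γ * P s' a s'')) • fderiv ℝ (fun ϑ => U ϑ ω' s'') ϑ₀) := by
      intro ω' s''
      by_cases h : ω' = ω <;> simp [h, add_mul, add_smul, smul_smul]
    calc (∑ ω', ∑ s'',
        (((1 - β ϑ₀ ω s') * (if ω' = ω then 1 else 0) + β ϑ₀ ω s' * πΩ s' ω') *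
          ∑ a, π ω' s' a * (γ * P s' a s'')) •
          fderiv ℝ (fun ϑ => U ϑ ω' s'') ϑ₀)
        = ∑ ω', ((if ω' = ω then (1 - β ϑ₀ ω s') •
              (∑ s'', (∑ a, π ω' s' a * (γ * P s' a s'')) • fderiv ℝ (fun ϑ => U ϑ ω' s'') ϑ₀)
            else 0)
          + (β ϑ₀ ω s' * πΩ s' ω') •
              (∑ s'', (∑ a, π ω' s' a * (γ * P s' a s'')) • fderiv ℝ (fun ϑ => U ϑ ω' s'') ϑ₀)) := by
          refine Finset.sum_congr rfl fun ω' _ => ?_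
          rw [Finset.sum_congr rfl fun s'' _ => split ω' s'', Finset.sum_add_distrib]
          congr 1
          · by_cases h : ω' = ω <;> simp [h, Finset.smul_sum]
          · rw [Finset.smul_sum]
      _ = ∑ ω', ((if ω' = ω then (1 - β ϑ₀ ω s') • fderiv ℝ (fun ϑ => Q ϑ s' ω') ϑ₀ else 0)
          + (β ϑ₀ ω s' * πΩ s' ω') • fderiv ℝ (fun ϑ => Q ϑ s' ω') ϑ₀) := by
          refine Finset.sum_congr rfl fun ω' _ => ?_
          rw [hDQ s' ω']
      _ = (1 - β ϑ₀ ω s') • fderiv ℝ (fun ϑ => Q ϑ s' ω) ϑ₀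
          + β ϑ₀ ω s' • fderiv ℝ (fun ϑ => ∑ ω', πΩ s' ω' * Q ϑ s' ω') ϑ₀ := by
          rw [Finset.sum_add_distrib, Finset.sum_ite_eq' Finset.univ ω
            (fun ω' => (1 - β ϑ₀ ω s') • fderiv ℝ (fun ϑ => Q ϑ s' ω') ϑ₀)]
          simp only [Finset.mem_univ, if_true]
          congr 1
          rw [hDV, Finset.smul_sum]
          exact Finset.sum_congr rfl fun ω' _ => by rw [smul_smul]
  rw [hLHS, hRHS]
  set DQ := fderiv ℝ (fun ϑ => Q ϑ s' ω) ϑ₀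
  set DV := fderiv ℝ (fun ϑ => ∑ ω', πΩ s' ω' * Q ϑ s' ω') ϑ₀
  set q := Q ϑ₀ s' ω
  set v := ∑ ω', πΩ s' ω' * Q ϑ₀ s' ω'
  set b := β ϑ₀ ω s'
  module
end

section
/- Series expansion of the termination gradient: under the assumptions of the Termination Gradient Theorem, for every option ω and state s', ∂U^ϑ(ω, s')/∂ϑ = −∑_{k=0}^∞ ∑_{ω'', s''} P̃_γ^{(k)}(s'', ω'' | s', ω) (∂β_{ω'',ϑ}(s'')/∂ϑ) A_Ω^ϑ(s'', ω''), where A_Ω^ϑ(s'', ω'') = Q_Ω^ϑ(s'', ω'') − V_Ω^ϑ(s'') and the series converges absolutely. -/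
open Finset Filter Topology


lemma tgse_series {X : Type*} [Fintype X] [DecidableEq X]
    {E : Type*} [NormedAddCommGroup E] [NormedSpace ℝ E] [CompleteSpace E]
    (κ : X → X → ℝ) (γ : ℝ) (hγ0 : 0 ≤ γ) (hγ1 : γ < 1)
    (hκ0 : ∀ x z, 0 ≤ κ x z) (hrow : ∀ x, ∑ z, κ x z ≤ γ)
    (Pk : ℕ → X → X → ℝ) (hPk0 : ∀ x y, Pk 0 x y = if x = y then 1 else 0)
    (hPkS : ∀ k x y, Pk (k+1) x y = ∑ z, κ x z * Pk k z y)
    (D G : X → E) (hD : ∀ x, D x = -G x + ∑ z, κ x z • D z) (x : X) :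
    Summable (fun k => ‖∑ z, Pk k x z • G z‖) ∧
      D x = -∑' k, ∑ z, Pk k x z • G z := by
  -- nonnegativity of Pk entries
  have hPknn : ∀ k x y, 0 ≤ Pk k x y := by
    intro k
    induction k with
    | zero => intro x y; rw [hPk0]; split <;> norm_num
    | succ k ih =>
      intro x y; rw [hPkS]
      exact Finset.sum_nonneg fun z _ => mul_nonneg (hκ0 x z) (ih z y)
  -- row sums
  have hPkrow : ∀ k x, ∑ y, Pk k x y ≤ γ ^ k := by
    intro k
    induction k with
    | zero => intro x; simp [hPk0]
    | succ k ih =>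
      intro x
      calc ∑ y, Pk (k+1) x y = ∑ y, ∑ z, κ x z * Pk k z y := by
            simp only [hPkS]
        _ = ∑ z, κ x z * ∑ y, Pk k z y := by
            rw [Finset.sum_comm]; simp [Finset.mul_sum]
        _ ≤ ∑ z, κ x z * γ ^ k := by
            apply Finset.sum_le_sum; intro z _
            exact mul_le_mul_of_nonneg_left (ih z) (hκ0 x z)
        _ = (∑ z, κ x z) * γ ^ k := by rw [Finset.sum_mul]
        _ ≤ γ * γ ^ k := by
            exact mul_le_mul_of_nonneg_right (hrow x) (pow_nonneg hγ0 k)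
        _ = γ ^ (k+1) := by ring
  -- right composition
  have hPkS' : ∀ k x y, Pk (k+1) x y = ∑ z, Pk k x z * κ z y := by
    intro k
    induction k with
    | zero =>
      intro x y
      rw [hPkS]
      simp [hPk0]
    | succ k ih =>
      intro x y
      rw [hPkS]
      calc ∑ z, κ x z * Pk (k+1) z y = ∑ z, κ x z * ∑ w, Pk k z w * κ w y := by
            simp only [ih]
        _ = ∑ w, (∑ z, κ x z * Pk k z w) * κ w y := by
            simp only [Finset.mul_sum]
            rw [Finset.sum_comm]
            congr 1; ext w
            rw [Finset.sum_mul]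
            congr 1; ext z; ring
        _ = ∑ w, Pk (k+1) x w * κ w y := by
            simp only [hPkS]
  set T : ℕ → E := fun k => ∑ z, Pk k x z • G z with hT
  have hCG : ∀ z, ‖G z‖ ≤ ∑ w, ‖G w‖ := by
    intro z
    exact Finset.single_le_sum (fun w _ => norm_nonneg (G w)) (Finset.mem_univ z)
  have hTb : ∀ k, ‖T k‖ ≤ γ ^ k * ∑ w, ‖G w‖ := by
    intro k
    calc ‖T k‖ ≤ ∑ z, ‖Pk k x z • G z‖ := norm_sum_le _ _
      _ = ∑ z, Pk k x z * ‖G z‖ := by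
          congr 1; ext z
          rw [norm_smul, Real.norm_of_nonneg (hPknn k x z)]
      _ ≤ ∑ z, Pk k x z * ∑ w, ‖G w‖ := by
          apply Finset.sum_le_sum; intro z _
          exact mul_le_mul_of_nonneg_left (hCG z) (hPknn k x z)
      _ = (∑ z, Pk k x z) * ∑ w, ‖G w‖ := by rw [Finset.sum_mul]
      _ ≤ γ ^ k * ∑ w, ‖G w‖ := by
          exact mul_le_mul_of_nonneg_right (hPkrow k x)
            (Finset.sum_nonneg fun w _ => norm_nonneg _)
  have hsum : Summable (fun k => ‖T k‖) := by
    apply Summable.of_nonneg_of_le (fun k => norm_nonneg _) hTb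
    exact (summable_geometric_of_lt_one hγ0 hγ1).mul_right _
  refine ⟨hsum, ?_⟩
  have hTs : Summable T := Summable.of_norm hsum
  -- iteration identity
  have hiter : ∀ n, D x = -(∑ k ∈ Finset.range n, T k) + ∑ z, Pk n x z • D z := by
    intro n
    induction n with
    | zero =>
      simp only [Finset.range_zero, Finset.sum_empty, neg_zero, zero_add]
      rw [show ∑ z, Pk 0 x z • D z = D x by simp [hPk0]]
    | succ n ih =>
      rw [ih]
      have step : ∑ z, Pk n x z • D z = -T n + ∑ z, Pk (n+1) x z • D z := by
        calc ∑ z, Pk n x z • D z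
            = ∑ z, Pk n x z • (-G z + ∑ w, κ z w • D w) := by
              congr 1; ext z; rw [← hD z]
          _ = ∑ z, (Pk n x z • (-G z) + ∑ w, (Pk n x z * κ z w) • D w) := by
              congr 1; ext z
              rw [smul_add, Finset.smul_sum]
              congr 1
              congr 1; ext w; rw [smul_smul]
          _ = -T n + ∑ z, ∑ w, (Pk n x z * κ z w) • D w := by
              rw [Finset.sum_add_distrib]
              congr 1
              rw [hT, ← Finset.sum_neg_distrib]
              congr 1; ext z; rw [smul_neg]
          _ = -T n + ∑ w, Pk (n+1) x w • D w := by
              congr 1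
              rw [Finset.sum_comm]
              congr 1; ext w
              rw [← Finset.sum_smul, ← hPkS']
      rw [step, Finset.sum_range_succ, neg_add]
      abel
  -- remainder tends to zero
  have hrem : Tendsto (fun n => ∑ z, Pk n x z • D z) atTop (𝓝 0) := by
    have hb : ∀ n, ‖∑ z, Pk n x z • D z‖ ≤ γ ^ n * ∑ w, ‖D w‖ := by
      intro n
      calc ‖∑ z, Pk n x z • D z‖ ≤ ∑ z, ‖Pk n x z • D z‖ := norm_sum_le _ _
        _ = ∑ z, Pk n x z * ‖D z‖ := by
            congr 1; ext z
            rw [norm_smul, Real.norm_of_nonneg (hPknn n x z)]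
        _ ≤ ∑ z, Pk n x z * ∑ w, ‖D w‖ := by
            apply Finset.sum_le_sum; intro z _
            exact mul_le_mul_of_nonneg_left
              (Finset.single_le_sum (fun w _ => norm_nonneg (D w)) (Finset.mem_univ z))
              (hPknn n x z)
        _ = (∑ z, Pk n x z) * ∑ w, ‖D w‖ := by rw [Finset.sum_mul]
        _ ≤ γ ^ n * ∑ w, ‖D w‖ := mul_le_mul_of_nonneg_right (hPkrow n x)
            (Finset.sum_nonneg fun w _ => norm_nonneg _)
    have hg : Tendsto (fun n => γ ^ n * ∑ w, ‖D w‖) atTop (𝓝 0) := by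
      rw [show (0:ℝ) = 0 * ∑ w, ‖D w‖ by ring]
      exact (tendsto_pow_atTop_nhds_zero_of_lt_one hγ0 hγ1).mul_const _
    exact squeeze_zero_norm hb hg
  have hps : Tendsto (fun n => -(∑ k ∈ Finset.range n, T k) + ∑ z, Pk n x z • D z)
      atTop (𝓝 (-∑' k, T k + 0)) :=
    (hTs.hasSum.tendsto_sum_nat.neg).add hrem
  have : Tendsto (fun _ : ℕ => D x) atTop (𝓝 (-∑' k, T k + 0)) := by
    refine hps.congr fun n => (hiter n).symm
  rw [add_zero] at this
  exact tendsto_nhds_unique this tendsto_const_nhds |>.symm ▸ rfl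


lemma tgse_diff {X : Type*} [Fintype X] [DecidableEq X]
    {F : Type*} [NormedAddCommGroup F] [NormedSpace ℝ F]
    (κ : F → X → X → ℝ) (c u : F → X → ℝ) (γ : ℝ) (hγ0 : 0 ≤ γ) (hγ1 : γ < 1)
    (hκd : ∀ x z, Differentiable ℝ (fun ϑ => κ ϑ x z))
    (hcd : ∀ x, Differentiable ℝ (fun ϑ => c ϑ x))
    (hrow : ∀ ϑ x, ∑ z, |κ ϑ x z| ≤ γ)
    (hu : ∀ ϑ x, u ϑ x = c ϑ x + ∑ z, κ ϑ x z * u ϑ z) :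
    ∀ x, Differentiable ℝ (fun ϑ => u ϑ x) := by
  classical
  set E : X → X → ((X → ℝ) →L[ℝ] (X → ℝ)) :=
    fun x z => (ContinuousLinearMap.proj z).smulRight (Pi.single x (1:ℝ)) with hE
  set Mc : F → ((X → ℝ) →L[ℝ] (X → ℝ)) :=
    fun ϑ => ∑ x, ∑ z, κ ϑ x z • E x z with hMc
  have happly : ∀ ϑ (v : X → ℝ) (y : X), Mc ϑ v y = ∑ z, κ ϑ y z * v z := by
    intro ϑ v y
    rw [hMc]
    simp only [ContinuousLinearMap.coe_sum', Finset.sum_apply,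
      ContinuousLinearMap.coe_smul', Pi.smul_apply, hE,
      ContinuousLinearMap.smulRight_apply, ContinuousLinearMap.proj_apply,
      smul_eq_mul, Pi.single_apply]
    rw [Finset.sum_comm]
    congr 1; ext z
    rw [Finset.sum_eq_single y]
    · simp
    · intro b _ hb; simp [Ne.symm hb]
    · intro h; exact absurd (Finset.mem_univ y) h
  have hMnorm : ∀ ϑ, ‖Mc ϑ‖ ≤ γ := by
    intro ϑ
    apply ContinuousLinearMap.opNorm_le_bound _ hγ0
    intro v
    rw [pi_norm_le_iff_of_nonneg (mul_nonneg hγ0 (norm_nonneg v))]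
    intro y
    rw [happly]
    calc ‖∑ z, κ ϑ y z * v z‖ ≤ ∑ z, ‖κ ϑ y z * v z‖ := norm_sum_le _ _
      _ = ∑ z, |κ ϑ y z| * ‖v z‖ := by
          congr 1; ext z; rw [norm_mul]; rfl
      _ ≤ ∑ z, |κ ϑ y z| * ‖v‖ := by
          apply Finset.sum_le_sum; intro z _
          exact mul_le_mul_of_nonneg_left (norm_le_pi_norm v z) (abs_nonneg _)
      _ = (∑ z, |κ ϑ y z|) * ‖v‖ := by rw [Finset.sum_mul]
      _ ≤ γ * ‖v‖ := mul_le_mul_of_nonneg_right (hrow ϑ y) (norm_nonneg v)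
  have hunit : ∀ ϑ, IsUnit ((1 : (X → ℝ) →L[ℝ] (X → ℝ)) - Mc ϑ) := by
    intro ϑ
    exact ⟨Units.oneSub (Mc ϑ) (lt_of_le_of_lt (hMnorm ϑ) hγ1), rfl⟩
  have hfix : ∀ ϑ, ((1 : (X → ℝ) →L[ℝ] (X → ℝ)) - Mc ϑ) (fun x => u ϑ x)
      = fun x => c ϑ x := by
    intro ϑ
    funext y
    simp only [ContinuousLinearMap.sub_apply, ContinuousLinearMap.one_apply]
    rw [Pi.sub_apply, happly]
    have := hu ϑ y
    rw [this]; ring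
  have huval : ∀ ϑ, (fun x => u ϑ x)
      = Ring.inverse ((1 : (X → ℝ) →L[ℝ] (X → ℝ)) - Mc ϑ) (fun x => c ϑ x) := by
    intro ϑ
    obtain ⟨w, hw⟩ := hunit ϑ
    rw [← hw, Ring.inverse_unit, ← hfix ϑ, ← hw]
    rw [← ContinuousLinearMap.comp_apply, ← ContinuousLinearMap.mul_def]
    rw [show (↑w⁻¹ : (X → ℝ) →L[ℝ] (X → ℝ)) * ↑w = 1 from by
      simp [w.inv_mul]]
    simp
  have hMd : Differentiable ℝ Mc := by
    apply Differentiable.fun_sum; intro x _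
    apply Differentiable.fun_sum; intro z _
    exact (hκd x z).smul_const (E x z)
  have hinvd : Differentiable ℝ
      (fun ϑ => Ring.inverse ((1 : (X → ℝ) →L[ℝ] (X → ℝ)) - Mc ϑ)) :=
    Differentiable.inverse ((differentiable_const _).sub hMd) hunit
  have hcd' : Differentiable ℝ (fun ϑ => (fun x => c ϑ x)) := by
    rw [differentiable_pi]; exact hcd
  have hud : Differentiable ℝ (fun ϑ => (fun x => u ϑ x)) := by
    have : (fun ϑ => (fun x => u ϑ x)) = fun ϑ =>
        Ring.inverse ((1 : (X → ℝ) →L[ℝ] (X → ℝ)) - Mc ϑ) (fun x => c ϑ x) := by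
      funext ϑ; exact huval ϑ
    rw [this]
    exact hinvd.clm_apply hcd'
  intro x
  exact (differentiable_pi.mp hud) x

section Draft
variable {S A O : Type*} [Fintype S] [Fintype A] [Fintype O]
    [DecidableEq S] [DecidableEq O]
    {m : ℕ} (ϑ₀ : Fin m → ℝ)
    (P : S → A → S → ℝ) (r : S → A → ℝ) (γ : ℝ)
    (hP0 : ∀ s a s', 0 ≤ P s a s') (hP1 : ∀ s a, ∑ s', P s a s' = 1)
    (hγ0 : 0 ≤ γ) (hγ1 : γ < 1)
    (π : O → S → A → ℝ)
    (hπ0 : ∀ ω s a, 0 ≤ π ω s a) (hπ1 : ∀ ω s, ∑ a, π ω s a = 1)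
    (β : (Fin m → ℝ) → O → S → ℝ)
    (hβ0 : ∀ ϑ ω s, 0 ≤ β ϑ ω s) (hβ1 : ∀ ϑ ω s, β ϑ ω s ≤ 1)
    (πΩ : S → O → ℝ) (hπΩ0 : ∀ s ω, 0 ≤ πΩ s ω) (hπΩ1 : ∀ s, ∑ ω, πΩ s ω = 1)
    (Q : (Fin m → ℝ) → S → O → ℝ) (U : (Fin m → ℝ) → O → S → ℝ)
    (QU : (Fin m → ℝ) → S → O → A → ℝ)
    (hQ : ∀ ϑ s ω, Q ϑ s ω = ∑ a, π ω s a * QU ϑ s ω a)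
    (hQU : ∀ ϑ s ω a, QU ϑ s ω a = r s a + γ * ∑ s', P s a s' * U ϑ ω s')
    (hU : ∀ ϑ ω s', U ϑ ω s' =
      (1 - β ϑ ω s') * Q ϑ s' ω + β ϑ ω s' * ∑ ω', πΩ s' ω' * Q ϑ s' ω')
    (hβdiff : ∀ ω s, Differentiable ℝ (fun ϑ => β ϑ ω s))

-- the one-step kernel
example : True := trivial

include hP1 hπ1 hπΩ1 in
lemma draft_row (ϑ : Fin m → ℝ) (x : S × O) :
    ∑ z : S × O, (((1 - β ϑ x.2 x.1) * (if z.2 = x.2 then 1 else 0) + β ϑ x.2 x.1 * πΩ x.1 z.2) *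
        ∑ a, π z.2 x.1 a * (γ * P x.1 a z.1)) = γ := by
  rw [Fintype.sum_prod_type]
  rw [Finset.sum_comm]
  have inner : ∀ ω₂ : O, ∑ s₂ : S, ∑ a, π ω₂ x.1 a * (γ * P x.1 a s₂) = γ := by
    intro ω₂
    rw [Finset.sum_comm]
    have : ∀ a, ∑ s₂, π ω₂ x.1 a * (γ * P x.1 a s₂) = π ω₂ x.1 a * γ := by
      intro a
      rw [← Finset.mul_sum, ← Finset.mul_sum, hP1]
      ring
    simp only [this]
    rw [← Finset.sum_mul, hπ1, one_mul]
  calc ∑ ω₂ : O, ∑ s₂ : S,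
        (((1 - β ϑ x.2 x.1) * (if ω₂ = x.2 then 1 else 0) + β ϑ x.2 x.1 * πΩ x.1 ω₂) *
          ∑ a, π ω₂ x.1 a * (γ * P x.1 a s₂))
      = ∑ ω₂ : O, ((1 - β ϑ x.2 x.1) * (if ω₂ = x.2 then 1 else 0) + β ϑ x.2 x.1 * πΩ x.1 ω₂) *
          ∑ s₂ : S, ∑ a, π ω₂ x.1 a * (γ * P x.1 a s₂) := by
        congr 1; ext ω₂; rw [Finset.mul_sum]
    _ = ∑ ω₂ : O, ((1 - β ϑ x.2 x.1) * (if ω₂ = x.2 then 1 else 0) + β ϑ x.2 x.1 * πΩ x.1 ω₂) * γ := by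
        simp only [inner]
    _ = γ := by
        rw [← Finset.sum_mul]
        have : ∑ ω₂ : O, ((1 - β ϑ x.2 x.1) * (if ω₂ = x.2 then 1 else 0) + β ϑ x.2 x.1 * πΩ x.1 ω₂) = 1 := by
          rw [Finset.sum_add_distrib, ← Finset.mul_sum, ← Finset.mul_sum, hπΩ1]
          simp [Finset.sum_ite_eq' Finset.univ x.2]
        rw [this, one_mul]


include hU in
lemma draft_Uw (ϑ : Fin m → ℝ) (ω₁ : O) (s₁ : S) :
    U ϑ ω₁ s₁ = ∑ ω', ((1 - β ϑ ω₁ s₁) * (if ω' = ω₁ then 1 else 0) + β ϑ ω₁ s₁ * πΩ s₁ ω') *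
      Q ϑ s₁ ω' := by
  rw [hU]
  simp only [add_mul, Finset.sum_add_distrib, mul_assoc, ← Finset.mul_sum]
  congr 2
  · simp [ite_mul, Finset.sum_ite_eq' Finset.univ ω₁]

include hQ hQU in
lemma draft_Qexp (ϑ : Fin m → ℝ) (s₁ : S) (ω₁ : O) :
    Q ϑ s₁ ω₁ = (∑ a, π ω₁ s₁ a * r s₁ a) +
      ∑ s₂, (∑ a, π ω₁ s₁ a * (γ * P s₁ a s₂)) * U ϑ ω₁ s₂ := by
  rw [hQ]
  simp only [hQU, mul_add, Finset.sum_add_distrib]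
  congr 1
  simp only [Finset.mul_sum]
  rw [Finset.sum_comm]
  congr 1; ext s₂
  rw [Finset.sum_mul]
  congr 1; ext a; ring

include hQ hQU hU in
lemma draft_fix (ϑ : Fin m → ℝ) (x : S × O) :
    U ϑ x.2 x.1 =
      (∑ ω', ((1 - β ϑ x.2 x.1) * (if ω' = x.2 then 1 else 0) + β ϑ x.2 x.1 * πΩ x.1 ω') *
        ∑ a, π ω' x.1 a * r x.1 a) +
      ∑ z : S × O, (((1 - β ϑ x.2 x.1) * (if z.2 = x.2 then 1 else 0) + β ϑ x.2 x.1 * πΩ x.1 z.2) *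
        ∑ a, π z.2 x.1 a * (γ * P x.1 a z.1)) * U ϑ z.2 z.1 := by
  rw [draft_Uw β πΩ Q U hU ϑ x.2 x.1]
  calc ∑ ω', ((1 - β ϑ x.2 x.1) * (if ω' = x.2 then 1 else 0) + β ϑ x.2 x.1 * πΩ x.1 ω') *
        Q ϑ x.1 ω'
      = ∑ ω', ((((1 - β ϑ x.2 x.1) * (if ω' = x.2 then 1 else 0) + β ϑ x.2 x.1 * πΩ x.1 ω') *
          ∑ a, π ω' x.1 a * r x.1 a) +
        ∑ s₂, (((1 - β ϑ x.2 x.1) * (if ω' = x.2 then 1 else 0) + β ϑ x.2 x.1 * πΩ x.1 ω') *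
          ∑ a, π ω' x.1 a * (γ * P x.1 a s₂)) * U ϑ ω' s₂) := by
        refine Finset.sum_congr rfl fun ω' _ => ?_
        rw [draft_Qexp P r γ π Q U QU hQ hQU ϑ x.1 ω', mul_add]
        congr 1
        rw [Finset.mul_sum]
        refine Finset.sum_congr rfl fun s₂ _ => ?_
        ring
    _ = _ := by
        rw [Finset.sum_add_distrib]
        congr 1
        rw [Fintype.sum_prod_type, Finset.sum_comm]


include hβ0 hβ1 hπΩ0 hπ0 hP0 hγ0 in
lemma draft_nn (ϑ : Fin m → ℝ) (x z : S × O) :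
    0 ≤ ((1 - β ϑ x.2 x.1) * (if z.2 = x.2 then 1 else 0) + β ϑ x.2 x.1 * πΩ x.1 z.2) *
      ∑ a, π z.2 x.1 a * (γ * P x.1 a z.1) := by
  apply mul_nonneg
  · apply add_nonneg
    · apply mul_nonneg (sub_nonneg.2 (hβ1 ϑ x.2 x.1))
      split <;> norm_num
    · exact mul_nonneg (hβ0 ϑ x.2 x.1) (hπΩ0 x.1 z.2)
  · exact Finset.sum_nonneg fun a _ => mul_nonneg (hπ0 z.2 x.1 a)
      (mul_nonneg hγ0 (hP0 x.1 a z.1))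

include hP0 hP1 hγ0 hγ1 hπ0 hπ1 hβ0 hβ1 hπΩ0 hπΩ1 hQ hQU hU hβdiff in
lemma draft_Ud : ∀ x : S × O, Differentiable ℝ (fun ϑ => U ϑ x.2 x.1) := by
  apply tgse_diff
    (fun ϑ (x z : S × O) =>
      (((1 - β ϑ x.2 x.1) * (if z.2 = x.2 then 1 else 0) + β ϑ x.2 x.1 * πΩ x.1 z.2) *
        ∑ a, π z.2 x.1 a * (γ * P x.1 a z.1)))
    (fun ϑ x => ∑ ω', ((1 - β ϑ x.2 x.1) * (if ω' = x.2 then 1 else 0) +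
      β ϑ x.2 x.1 * πΩ x.1 ω') * ∑ a, π ω' x.1 a * r x.1 a)
    (fun ϑ x => U ϑ x.2 x.1) γ hγ0 hγ1
  · intro x z
    exact ((((differentiable_const (1:ℝ)).sub (hβdiff x.2 x.1)).mul_const _).add
      ((hβdiff x.2 x.1).mul_const _)).mul_const _
  · intro x
    apply Differentiable.fun_sum
    intro ω' _
    exact ((((differentiable_const (1:ℝ)).sub (hβdiff x.2 x.1)).mul_const _).add
      ((hβdiff x.2 x.1).mul_const _)).mul_const _
  · intro ϑ x
    have h1 : ∀ z : S × O,
        |(((1 - β ϑ x.2 x.1) * (if z.2 = x.2 then 1 else 0) + β ϑ x.2 x.1 * πΩ x.1 z.2) *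
          ∑ a, π z.2 x.1 a * (γ * P x.1 a z.1))|
        = (((1 - β ϑ x.2 x.1) * (if z.2 = x.2 then 1 else 0) + β ϑ x.2 x.1 * πΩ x.1 z.2) *
          ∑ a, π z.2 x.1 a * (γ * P x.1 a z.1)) := fun z =>
      abs_of_nonneg (draft_nn P γ hP0 hγ0 π hπ0 β hβ0 hβ1 πΩ hπΩ0 ϑ x z)
    calc ∑ z : S × O, |_| = _ := Finset.sum_congr rfl fun z _ => h1 z
      _ ≤ γ := le_of_eq (draft_row P γ hP1 π hπ1 β πΩ hπΩ1 ϑ x)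
  · exact draft_fix P r γ π β πΩ Q U QU hQ hQU hU

include hQ hQU in
lemma draft_Qhas (hUd : ∀ x : S × O, Differentiable ℝ (fun ϑ => U ϑ x.2 x.1))
    (s₁ : S) (ω₁ : O) :
    HasFDerivAt (fun ϑ => Q ϑ s₁ ω₁)
      (∑ a, π ω₁ s₁ a • (γ • ∑ s₂, P s₁ a s₂ •
        fderiv ℝ (fun ϑ => U ϑ ω₁ s₂) ϑ₀)) ϑ₀ := by
  have hfun : (fun ϑ => Q ϑ s₁ ω₁) =
      fun ϑ => ∑ a, π ω₁ s₁ a * (r s₁ a + γ * ∑ s₂, P s₁ a s₂ * U ϑ ω₁ s₂) := by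
    funext ϑ; rw [hQ]; exact Finset.sum_congr rfl fun a _ => by rw [hQU]
  rw [hfun]
  refine HasFDerivAt.fun_sum fun a _ => ?_
  refine HasFDerivAt.const_mul ?_ (π ω₁ s₁ a)
  refine HasFDerivAt.const_add (c := r s₁ a) ?_
  refine HasFDerivAt.const_mul ?_ γ
  refine HasFDerivAt.fun_sum fun s₂ _ => ?_
  exact HasFDerivAt.const_mul ((hUd (s₂, ω₁)) ϑ₀).hasFDerivAt (P s₁ a s₂)


include hU hβdiff hQ hQU in
lemma draft_Dx (hUd : ∀ x : S × O, Differentiable ℝ (fun ϑ => U ϑ x.2 x.1))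
    (s₁ : S) (ω₁ : O) :
    fderiv ℝ (fun ϑ => U ϑ ω₁ s₁) ϑ₀ =
      -((Q ϑ₀ s₁ ω₁ - ∑ ω', πΩ s₁ ω' * Q ϑ₀ s₁ ω') •
          fderiv ℝ (fun ϑ => β ϑ ω₁ s₁) ϑ₀) +
      ∑ z : S × O,
        ((((1 - β ϑ₀ ω₁ s₁) * (if z.2 = ω₁ then 1 else 0) + β ϑ₀ ω₁ s₁ * πΩ s₁ z.2) *
          ∑ a, π z.2 s₁ a * (γ * P s₁ a z.1)) •
          fderiv ℝ (fun ϑ => U ϑ z.2 z.1) ϑ₀) := by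
  set Dβ := fderiv ℝ (fun ϑ => β ϑ ω₁ s₁) ϑ₀ with hDβ
  set DQ : O → ((Fin m → ℝ) →L[ℝ] ℝ) := fun ω' => ∑ a, π ω' s₁ a • (γ • ∑ s₂, P s₁ a s₂ •
    fderiv ℝ (fun ϑ => U ϑ ω' s₂) ϑ₀) with hDQ
  have hβhas : HasFDerivAt (fun ϑ => β ϑ ω₁ s₁) Dβ ϑ₀ := (hβdiff ω₁ s₁ ϑ₀).hasFDerivAt
  have h1 : HasFDerivAt (fun ϑ => 1 - β ϑ ω₁ s₁) (-Dβ) ϑ₀ := hβhas.const_sub 1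
  have hQ1 : HasFDerivAt (fun ϑ => Q ϑ s₁ ω₁) (DQ ω₁) ϑ₀ :=
    draft_Qhas ϑ₀ P r γ π Q U QU hQ hQU hUd s₁ ω₁
  have hV : HasFDerivAt (fun ϑ => ∑ ω', πΩ s₁ ω' * Q ϑ s₁ ω')
      (∑ ω', πΩ s₁ ω' • DQ ω') ϑ₀ :=
    HasFDerivAt.fun_sum fun ω' _ =>
      (draft_Qhas ϑ₀ P r γ π Q U QU hQ hQU hUd s₁ ω').const_mul (πΩ s₁ ω')
  have hUhas : HasFDerivAt (fun ϑ => U ϑ ω₁ s₁)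
      (((1 - β ϑ₀ ω₁ s₁) • DQ ω₁ + Q ϑ₀ s₁ ω₁ • (-Dβ)) +
        (β ϑ₀ ω₁ s₁ • (∑ ω', πΩ s₁ ω' • DQ ω') +
          (∑ ω', πΩ s₁ ω' * Q ϑ₀ s₁ ω') • Dβ)) ϑ₀ := by
    have hfun : (fun ϑ => U ϑ ω₁ s₁) = fun ϑ =>
        (1 - β ϑ ω₁ s₁) * Q ϑ s₁ ω₁ + β ϑ ω₁ s₁ * ∑ ω', πΩ s₁ ω' * Q ϑ s₁ ω' := by
      funext ϑ; exact hU ϑ ω₁ s₁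
    rw [hfun]
    exact (h1.mul hQ1).add (hβhas.mul hV)
  rw [hUhas.fderiv]
  have hkey : (1 - β ϑ₀ ω₁ s₁) • DQ ω₁ + β ϑ₀ ω₁ s₁ • (∑ ω', πΩ s₁ ω' • DQ ω') =
      ∑ z : S × O,
        ((((1 - β ϑ₀ ω₁ s₁) * (if z.2 = ω₁ then 1 else 0) + β ϑ₀ ω₁ s₁ * πΩ s₁ z.2) *
          ∑ a, π z.2 s₁ a * (γ * P s₁ a z.1)) •
          fderiv ℝ (fun ϑ => U ϑ z.2 z.1) ϑ₀) := by
    calc (1 - β ϑ₀ ω₁ s₁) • DQ ω₁ + β ϑ₀ ω₁ s₁ • (∑ ω', πΩ s₁ ω' • DQ ω')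
        = ∑ ω', ((1 - β ϑ₀ ω₁ s₁) * (if ω' = ω₁ then 1 else 0) +
            β ϑ₀ ω₁ s₁ * πΩ s₁ ω') • DQ ω' := by
          simp only [add_smul, Finset.sum_add_distrib]
          congr 1
          · simp only [mul_smul, ← Finset.smul_sum]
            congr 1
            simp only [ite_smul, one_smul, zero_smul]
            rw [Finset.sum_ite_eq' Finset.univ ω₁]
            simp
          · rw [Finset.smul_sum]
            simp only [mul_smul]
      _ = ∑ ω', ∑ s₂, (((1 - β ϑ₀ ω₁ s₁) * (if ω' = ω₁ then 1 else 0) +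
            β ϑ₀ ω₁ s₁ * πΩ s₁ ω') * ∑ a, π ω' s₁ a * (γ * P s₁ a s₂)) •
            fderiv ℝ (fun ϑ => U ϑ ω' s₂) ϑ₀ := by
          refine Finset.sum_congr rfl fun ω' _ => ?_
          rw [hDQ]
          simp only [Finset.smul_sum, smul_smul]
          rw [Finset.sum_comm]
          refine Finset.sum_congr rfl fun s₂ _ => ?_
          rw [← Finset.sum_smul]
          congr 1
          rw [Finset.mul_sum]
      _ = _ := by
          rw [Fintype.sum_prod_type]
          rw [Finset.sum_comm]
  rw [← hkey]
  have hneg : -((Q ϑ₀ s₁ ω₁ - ∑ ω', πΩ s₁ ω' * Q ϑ₀ s₁ ω') • Dβ) =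
      Q ϑ₀ s₁ ω₁ • (-Dβ) + (∑ ω', πΩ s₁ ω' * Q ϑ₀ s₁ ω') • Dβ := by
    rw [sub_smul (R := ℝ) (M := (Fin m → ℝ) →L[ℝ] ℝ), smul_neg]
    abel
  rw [hneg]
  abel

end Draft



/-- **Series expansion of the termination gradient.** Under the assumptions of the
Termination Gradient Theorem, for every option `ω` and state `s'`:
`∂U(ω,s')/∂ϑ = −∑_{k=0}^∞ ∑_{ω'',s''} P̃_γ^{(k)}(s'',ω''|s',ω) ∂β_{ω'',ϑ}(s'')/∂ϑ · A_Ω(s'',ω'')`,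
where `A_Ω(s'',ω'') = Q_Ω(s'',ω'') − V_Ω(s'')` and the series converges absolutely. -/
theorem termination_gradient_series_expansion
    {S A O : Type*} [Fintype S] [Fintype A] [Fintype O]
    [DecidableEq S] [DecidableEq O]
    {m : ℕ} (ϑ₀ : Fin m → ℝ)
    (P : S → A → S → ℝ) (r : S → A → ℝ) (γ : ℝ)
    (hP0 : ∀ s a s', 0 ≤ P s a s') (hP1 : ∀ s a, ∑ s', P s a s' = 1)
    (hγ0 : 0 ≤ γ) (hγ1 : γ < 1)
    (π : O → S → A → ℝ)
    (hπ0 : ∀ ω s a, 0 ≤ π ω s a) (hπ1 : ∀ ω s, ∑ a, π ω s a = 1)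
    (β : (Fin m → ℝ) → O → S → ℝ)
    (hβ0 : ∀ ϑ ω s, 0 ≤ β ϑ ω s) (hβ1 : ∀ ϑ ω s, β ϑ ω s ≤ 1)
    (πΩ : S → O → ℝ) (hπΩ0 : ∀ s ω, 0 ≤ πΩ s ω) (hπΩ1 : ∀ s, ∑ ω, πΩ s ω = 1)
    (Q : (Fin m → ℝ) → S → O → ℝ) (U : (Fin m → ℝ) → O → S → ℝ)
    (QU : (Fin m → ℝ) → S → O → A → ℝ)
    (hQ : ∀ ϑ s ω, Q ϑ s ω = ∑ a, π ω s a * QU ϑ s ω a)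
    (hQU : ∀ ϑ s ω a, QU ϑ s ω a = r s a + γ * ∑ s', P s a s' * U ϑ ω s')
    (hU : ∀ ϑ ω s', U ϑ ω s' =
      (1 - β ϑ ω s') * Q ϑ s' ω + β ϑ ω s' * ∑ ω', πΩ s' ω' * Q ϑ s' ω')
    -- the k-step shifted discounted augmented transition kernel at `ϑ₀`
    (Pk : ℕ → (S × O) → (S × O) → ℝ)
    (hPk0 : ∀ x y, Pk 0 x y = if x = y then 1 else 0)
    (hPkS : ∀ k x y, Pk (k + 1) x y = ∑ z : S × O,
      (((1 - β ϑ₀ x.2 x.1) * (if z.2 = x.2 then 1 else 0) + β ϑ₀ x.2 x.1 * πΩ x.1 z.2) *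
        ∑ a, π z.2 x.1 a * (γ * P x.1 a z.1)) * Pk k z y)
    (hβdiff : ∀ ω s, Differentiable ℝ (fun ϑ => β ϑ ω s))
    (ω : O) (s' : S) :
    Summable (fun k => ‖∑ s'', ∑ ω'', Pk k (s', ω) (s'', ω'') •
      ((Q ϑ₀ s'' ω'' - ∑ ω', πΩ s'' ω' * Q ϑ₀ s'' ω') •
        fderiv ℝ (fun ϑ => β ϑ ω'' s'') ϑ₀)‖) ∧
    fderiv ℝ (fun ϑ => U ϑ ω s') ϑ₀ =
      -∑' k, ∑ s'', ∑ ω'', Pk k (s', ω) (s'', ω'') •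
        ((Q ϑ₀ s'' ω'' - ∑ ω', πΩ s'' ω' * Q ϑ₀ s'' ω') •
          fderiv ℝ (fun ϑ => β ϑ ω'' s'') ϑ₀) := by
  classical
  have hUd : ∀ x : S × O, Differentiable ℝ (fun ϑ => U ϑ x.2 x.1) :=
    draft_Ud P r γ hP0 hP1 hγ0 hγ1 π hπ0 hπ1 β hβ0 hβ1 πΩ hπΩ0 hπΩ1 Q U QU hQ hQU hU hβdiff
  have hD : ∀ x : S × O,
      (fun y : S × O => fderiv ℝ (fun ϑ => U ϑ y.2 y.1) ϑ₀) x =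
      -((fun y : S × O => (Q ϑ₀ y.1 y.2 - ∑ ω', πΩ y.1 ω' * Q ϑ₀ y.1 ω') •
          fderiv ℝ (fun ϑ => β ϑ y.2 y.1) ϑ₀) x) +
      ∑ z : S × O,
        ((((1 - β ϑ₀ x.2 x.1) * (if z.2 = x.2 then 1 else 0) + β ϑ₀ x.2 x.1 * πΩ x.1 z.2) *
          ∑ a, π z.2 x.1 a * (γ * P x.1 a z.1)) •
          (fun y : S × O => fderiv ℝ (fun ϑ => U ϑ y.2 y.1) ϑ₀) z) := by
    intro x
    exact draft_Dx ϑ₀ P r γ π β πΩ Q U QU hQ hQU hU hβdiff hUd x.1 x.2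
  obtain ⟨hs, he⟩ := tgse_series
    (fun (x z : S × O) =>
      (((1 - β ϑ₀ x.2 x.1) * (if z.2 = x.2 then 1 else 0) + β ϑ₀ x.2 x.1 * πΩ x.1 z.2) *
        ∑ a, π z.2 x.1 a * (γ * P x.1 a z.1)))
    γ hγ0 hγ1
    (fun x z => draft_nn P γ hP0 hγ0 π hπ0 β hβ0 hβ1 πΩ hπΩ0 ϑ₀ x z)
    (fun x => le_of_eq (draft_row P γ hP1 π hπ1 β πΩ hπΩ1 ϑ₀ x))
    Pk hPk0 (fun k x y => hPkS k x y)
    (fun y : S × O => fderiv ℝ (fun ϑ => U ϑ y.2 y.1) ϑ₀)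
    (fun y : S × O => (Q ϑ₀ y.1 y.2 - ∑ ω', πΩ y.1 ω' * Q ϑ₀ y.1 ω') •
      fderiv ℝ (fun ϑ => β ϑ y.2 y.1) ϑ₀)
    hD (s', ω)
  have hterm : ∀ k, (∑ s'', ∑ ω'', Pk k (s', ω) (s'', ω'') •
      ((Q ϑ₀ s'' ω'' - ∑ ω', πΩ s'' ω' * Q ϑ₀ s'' ω') •
        fderiv ℝ (fun ϑ => β ϑ ω'' s'') ϑ₀)) =
      ∑ z : S × O, Pk k (s', ω) z •
        ((fun y : S × O => (Q ϑ₀ y.1 y.2 - ∑ ω', πΩ y.1 ω' * Q ϑ₀ y.1 ω') •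
          fderiv ℝ (fun ϑ => β ϑ y.2 y.1) ϑ₀) z) := by
    intro k
    rw [Fintype.sum_prod_type]
  constructor
  · have : (fun k => ‖∑ s'', ∑ ω'', Pk k (s', ω) (s'', ω'') •
        ((Q ϑ₀ s'' ω'' - ∑ ω', πΩ s'' ω' * Q ϑ₀ s'' ω') •
          fderiv ℝ (fun ϑ => β ϑ ω'' s'') ϑ₀)‖) =
        fun k => ‖∑ z : S × O, Pk k (s', ω) z •
          ((fun y : S × O => (Q ϑ₀ y.1 y.2 - ∑ ω', πΩ y.1 ω' * Q ϑ₀ y.1 ω') •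
            fderiv ℝ (fun ϑ => β ϑ y.2 y.1) ϑ₀) z)‖ := by
      funext k; rw [hterm k]
    rw [this]
    exact hs
  · simp only [hterm]
    exact he
end

section
/- Differentiability of the option value functions in the termination parameters: if for every option ω and state s the map ϑ ↦ β_{ω,ϑ}(s) from ℝ^m to [0,1] is continuously differentiable, then for every (s, ω) the maps ϑ ↦ Q_Ω^ϑ(s, ω) and ϑ ↦ U^ϑ(ω, s) are differentiable on ℝ^m. -/
open scoped Matrix

/-- **Differentiability of the option value functions in the termination parameters.**
If every map `ϑ ↦ β_{ω,ϑ}(s)` (with values in `[0,1]`) is continuously differentiable,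
then `ϑ ↦ Q_Ω^ϑ(s,ω)` and `ϑ ↦ U^ϑ(ω,s)` are differentiable on `ℝ^m`. -/
theorem option_value_differentiable_in_termination_parameters
    {S A O : Type*} [Fintype S] [Fintype A] [Fintype O]
    {m : ℕ}
    (P : S → A → S → ℝ) (r : S → A → ℝ) (γ : ℝ)
    (hP0 : ∀ s a s', 0 ≤ P s a s') (hP1 : ∀ s a, ∑ s', P s a s' = 1)
    (hγ0 : 0 ≤ γ) (hγ1 : γ < 1)
    (π : O → S → A → ℝ)
    (hπ0 : ∀ ω s a, 0 ≤ π ω s a) (hπ1 : ∀ ω s, ∑ a, π ω s a = 1)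
    (β : (Fin m → ℝ) → O → S → ℝ)
    (hβ0 : ∀ ϑ ω s, 0 ≤ β ϑ ω s) (hβ1 : ∀ ϑ ω s, β ϑ ω s ≤ 1)
    (hβC1 : ∀ ω s, ContDiff ℝ 1 (fun ϑ => β ϑ ω s))
    (πΩ : S → O → ℝ) (hπΩ0 : ∀ s ω, 0 ≤ πΩ s ω) (hπΩ1 : ∀ s, ∑ ω, πΩ s ω = 1)
    (Q : (Fin m → ℝ) → S → O → ℝ) (U : (Fin m → ℝ) → O → S → ℝ)
    (QU : (Fin m → ℝ) → S → O → A → ℝ)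
    (hQ : ∀ ϑ s ω, Q ϑ s ω = ∑ a, π ω s a * QU ϑ s ω a)
    (hQU : ∀ ϑ s ω a, QU ϑ s ω a = r s a + γ * ∑ s', P s a s' * U ϑ ω s')
    (hU : ∀ ϑ ω s', U ϑ ω s' =
      (1 - β ϑ ω s') * Q ϑ s' ω + β ϑ ω s' * ∑ ω', πΩ s' ω' * Q ϑ s' ω') :
    (∀ s ω, Differentiable ℝ (fun ϑ => Q ϑ s ω)) ∧
    (∀ ω s, Differentiable ℝ (fun ϑ => U ϑ ω s)) := by
  classical
  letI : NormedRing (Matrix (S × O) (S × O) ℝ) := Matrix.linftyOpNormedRing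
  letI : NormedAlgebra ℝ (Matrix (S × O) (S × O) ℝ) := Matrix.linftyOpNormedAlgebra
  -- differentiability of β
  have hβd : ∀ ω s, Differentiable ℝ fun ϑ => β ϑ ω s := fun ω s =>
    (hβC1 ω s).differentiable one_ne_zero
  -- the matrix entries
  set f : (Fin m → ℝ) → (S × O) → (S × O) → ℝ := fun ϑ p q =>
    γ * ∑ a, π p.2 p.1 a * (P p.1 a q.1 *
      ((if p.2 = q.2 then 1 - β ϑ p.2 q.1 else 0) + β ϑ p.2 q.1 * πΩ q.1 q.2)) with hfdef
  set M : (Fin m → ℝ) → Matrix (S × O) (S × O) ℝ := fun ϑ => Matrix.of (f ϑ) with hMdef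
  set b : (S × O) → ℝ := fun p => ∑ a, π p.2 p.1 a * r p.1 a with hbdef
  -- entries are nonnegative
  have hf0 : ∀ ϑ p q, 0 ≤ f ϑ p q := by
    intro ϑ p q
    apply mul_nonneg hγ0
    apply Finset.sum_nonneg
    intro a _
    apply mul_nonneg (hπ0 _ _ _)
    apply mul_nonneg (hP0 _ _ _)
    apply add_nonneg
    · split_ifs
      · linarith [hβ1 ϑ p.2 q.1]
      · exact le_refl 0
    · exact mul_nonneg (hβ0 _ _ _) (hπΩ0 _ _)
  -- row sums are exactly γ
  have hsum : ∀ ϑ (p : S × O), ∑ q : S × O, f ϑ p q = γ := by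
    intro ϑ p
    have h1 : ∀ s', ∑ ω' : O,
        ((if p.2 = ω' then 1 - β ϑ p.2 s' else 0) + β ϑ p.2 s' * πΩ s' ω') = 1 := by
      intro s'
      rw [Finset.sum_add_distrib, Finset.sum_ite_eq, ← Finset.mul_sum, hπΩ1]
      simp
    have h2 : ∀ a, ∑ q : S × O, P p.1 a q.1 *
        ((if p.2 = q.2 then 1 - β ϑ p.2 q.1 else 0) + β ϑ p.2 q.1 * πΩ q.1 q.2) = 1 := by
      intro a
      rw [Fintype.sum_prod_type]
      calc (∑ s', ∑ ω' : O, P p.1 a s' *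
            ((if p.2 = ω' then 1 - β ϑ p.2 s' else 0) + β ϑ p.2 s' * πΩ s' ω'))
          = ∑ s', P p.1 a s' := by
            refine Finset.sum_congr rfl fun s' _ => ?_
            rw [← Finset.mul_sum, h1 s', mul_one]
        _ = 1 := hP1 p.1 a
    have h3 : ∑ q : S × O, ∑ a, π p.2 p.1 a * (P p.1 a q.1 *
        ((if p.2 = q.2 then 1 - β ϑ p.2 q.1 else 0) + β ϑ p.2 q.1 * πΩ q.1 q.2)) = 1 := by
      rw [Finset.sum_comm]
      calc (∑ a, ∑ q : S × O, π p.2 p.1 a * (P p.1 a q.1 *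
            ((if p.2 = q.2 then 1 - β ϑ p.2 q.1 else 0) + β ϑ p.2 q.1 * πΩ q.1 q.2)))
          = ∑ a, π p.2 p.1 a := by
            refine Finset.sum_congr rfl fun a _ => ?_
            rw [← Finset.mul_sum, h2 a, mul_one]
        _ = 1 := hπ1 p.2 p.1
    simp only [hfdef]
    rw [← Finset.mul_sum, h3, mul_one]
  -- the operator norm of M is at most γ
  have hnorm : ∀ ϑ, ‖M ϑ‖ < 1 := by
    intro ϑ
    rw [Matrix.linfty_opNorm_def]
    have hle : (Finset.univ.sup fun p : S × O => ∑ q, ‖M ϑ p q‖₊) ≤ ⟨γ, hγ0⟩ := by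
      apply Finset.sup_le
      intro p _
      refine NNReal.coe_le_coe.mp ?_
      push_cast
      have : ∑ q, ‖M ϑ p q‖ = ∑ q : S × O, f ϑ p q := by
        refine Finset.sum_congr rfl fun q _ => ?_
        simp [hMdef, Real.norm_eq_abs, abs_of_nonneg (hf0 ϑ p q)]
      rw [this, hsum]
      exact le_rfl
    calc ((Finset.univ.sup fun p : S × O => ∑ q, ‖M ϑ p q‖₊ : NNReal) : ℝ)
        ≤ ((⟨γ, hγ0⟩ : NNReal) : ℝ) := NNReal.coe_le_coe.mpr hle
      _ = γ := rfl
      _ < 1 := hγ1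
  have hunit : ∀ ϑ, IsUnit ((1 : Matrix (S × O) (S × O) ℝ) - M ϑ) := fun ϑ =>
    isUnit_one_sub_of_norm_lt_one (hnorm ϑ)
  -- the Bellman equation in matrix form
  have key : ∀ ϑ, ((1 : Matrix (S × O) (S × O) ℝ) - M ϑ) *ᵥ
      (fun q : S × O => Q ϑ q.1 q.2) = b := by
    intro ϑ
    funext p
    rw [Matrix.sub_mulVec, Matrix.one_mulVec, Pi.sub_apply]
    have hg : ∀ s', ∑ ω' : O,
        ((if p.2 = ω' then 1 - β ϑ p.2 s' else 0) + β ϑ p.2 s' * πΩ s' ω') * Q ϑ s' ω'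
        = U ϑ p.2 s' := by
      intro s'
      rw [hU ϑ p.2 s']
      rw [show (∑ ω' : O,
          ((if p.2 = ω' then 1 - β ϑ p.2 s' else 0) + β ϑ p.2 s' * πΩ s' ω') * Q ϑ s' ω')
          = ∑ ω' : O, ((if p.2 = ω' then (1 - β ϑ p.2 s') * Q ϑ s' p.2 else 0)
            + β ϑ p.2 s' * (πΩ s' ω' * Q ϑ s' ω')) from
        Finset.sum_congr rfl fun ω' _ => by
          split_ifs with h
          · subst h; ring
          · ring]
      rw [Finset.sum_add_distrib, Finset.sum_ite_eq, ← Finset.mul_sum]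
      simp
    have hq2 : ∀ a, ∑ q : S × O, P p.1 a q.1 *
        ((if p.2 = q.2 then 1 - β ϑ p.2 q.1 else 0) + β ϑ p.2 q.1 * πΩ q.1 q.2) * Q ϑ q.1 q.2
        = ∑ s', P p.1 a s' * U ϑ p.2 s' := by
      intro a
      rw [Fintype.sum_prod_type]
      refine Finset.sum_congr rfl fun s' _ => ?_
      calc (∑ ω' : O, P p.1 a s' *
            ((if p.2 = ω' then 1 - β ϑ p.2 s' else 0) + β ϑ p.2 s' * πΩ s' ω') * Q ϑ s' ω')
          = P p.1 a s' * ∑ ω' : O,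
            ((if p.2 = ω' then 1 - β ϑ p.2 s' else 0) + β ϑ p.2 s' * πΩ s' ω') * Q ϑ s' ω' := by
            rw [Finset.mul_sum]
            exact Finset.sum_congr rfl fun ω' _ => by ring
        _ = P p.1 a s' * U ϑ p.2 s' := by rw [hg s']
    have hMv : (M ϑ *ᵥ fun q : S × O => Q ϑ q.1 q.2) p
        = γ * ∑ a, π p.2 p.1 a * ∑ s', P p.1 a s' * U ϑ p.2 s' := by
      have hstep : (M ϑ *ᵥ fun q : S × O => Q ϑ q.1 q.2) p
          = ∑ q : S × O, f ϑ p q * Q ϑ q.1 q.2 := by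
        simp [Matrix.mulVec, dotProduct, hMdef]
      rw [hstep]
      calc ∑ q : S × O, f ϑ p q * Q ϑ q.1 q.2
          = ∑ q : S × O, ∑ a, γ * (π p.2 p.1 a * (P p.1 a q.1 *
              ((if p.2 = q.2 then 1 - β ϑ p.2 q.1 else 0) + β ϑ p.2 q.1 * πΩ q.1 q.2)
              * Q ϑ q.1 q.2)) := by
            refine Finset.sum_congr rfl fun q _ => ?_
            simp only [hfdef]
            rw [Finset.mul_sum, Finset.sum_mul]
            exact Finset.sum_congr rfl fun a _ => by ring
        _ = ∑ a, ∑ q : S × O, γ * (π p.2 p.1 a * (P p.1 a q.1 *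
              ((if p.2 = q.2 then 1 - β ϑ p.2 q.1 else 0) + β ϑ p.2 q.1 * πΩ q.1 q.2)
              * Q ϑ q.1 q.2)) := Finset.sum_comm
        _ = γ * ∑ a, π p.2 p.1 a * ∑ s', P p.1 a s' * U ϑ p.2 s' := by
            rw [Finset.mul_sum]
            refine Finset.sum_congr rfl fun a _ => ?_
            rw [← Finset.mul_sum, ← Finset.mul_sum, hq2 a]
    rw [hMv, hQ ϑ p.1 p.2]
    simp only [hbdef]
    rw [show (∑ a, π p.2 p.1 a * QU ϑ p.1 p.2 a)
        = (∑ a, π p.2 p.1 a * r p.1 a)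
          + γ * ∑ a, π p.2 p.1 a * ∑ s', P p.1 a s' * U ϑ p.2 s' from by
      rw [Finset.mul_sum, ← Finset.sum_add_distrib]
      refine Finset.sum_congr rfl fun a _ => ?_
      rw [hQU ϑ p.1 p.2 a]
      ring]
    ring
  -- representation of Q via the inverse matrix
  have hQrepr : ∀ ϑ (p : S × O),
      Q ϑ p.1 p.2 = (Ring.inverse ((1 : Matrix (S × O) (S × O) ℝ) - M ϑ) *ᵥ b) p := by
    intro ϑ p
    have h1 : Ring.inverse ((1 : Matrix (S × O) (S × O) ℝ) - M ϑ) *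
        ((1 : Matrix (S × O) (S × O) ℝ) - M ϑ) = 1 :=
      Ring.inverse_mul_cancel _ (hunit ϑ)
    calc Q ϑ p.1 p.2 = ((1 : Matrix (S × O) (S × O) ℝ) *ᵥ
          fun q : S × O => Q ϑ q.1 q.2) p := by rw [Matrix.one_mulVec]
      _ = ((Ring.inverse ((1 : Matrix (S × O) (S × O) ℝ) - M ϑ) *
            ((1 : Matrix (S × O) (S × O) ℝ) - M ϑ)) *ᵥ
          fun q : S × O => Q ϑ q.1 q.2) p := by rw [h1]
      _ = (Ring.inverse ((1 : Matrix (S × O) (S × O) ℝ) - M ϑ) *ᵥ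
          (((1 : Matrix (S × O) (S × O) ℝ) - M ϑ) *ᵥ
            fun q : S × O => Q ϑ q.1 q.2)) p := by rw [Matrix.mulVec_mulVec]
      _ = (Ring.inverse ((1 : Matrix (S × O) (S × O) ℝ) - M ϑ) *ᵥ b) p := by rw [key]
  -- differentiability of the matrix-valued map M
  have hfd : ∀ p q : S × O, Differentiable ℝ fun ϑ => f ϑ p q := by
    intro p q
    simp only [hfdef]
    apply Differentiable.const_mul
    apply Differentiable.fun_sum
    intro a _
    apply Differentiable.const_mul
    apply Differentiable.const_mul
    apply Differentiable.add
    · split_ifs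
      · exact (differentiable_const (1 : ℝ)).sub (hβd _ _)
      · exact differentiable_const 0
    · exact (hβd _ _).mul_const _
  have hMd : Differentiable ℝ M := by
    have hrepr : M = fun ϑ => ∑ p : S × O, ∑ q : S × O,
        f ϑ p q • Matrix.single p q (1 : ℝ) := by
      funext ϑ
      ext i j
      simp [hMdef, Matrix.sum_apply, Matrix.single, ite_and, mul_ite, mul_one,
        mul_zero, Finset.sum_ite_eq, Finset.sum_ite_eq']
    rw [hrepr]
    apply Differentiable.fun_sum
    intro p _
    apply Differentiable.fun_sum
    intro q _
    exact (hfd p q).smul_const _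
  -- differentiability of the inverse
  have hinvd : Differentiable ℝ fun ϑ =>
      Ring.inverse ((1 : Matrix (S × O) (S × O) ℝ) - M ϑ) := by
    intro ϑ
    exact DifferentiableAt.inverse ((differentiableAt_const _).sub (hMd ϑ)) (hunit ϑ)
  -- evaluation is a continuous linear map
  have hQd : ∀ s ω, Differentiable ℝ fun ϑ => Q ϑ s ω := by
    intro s ω
    have : (fun ϑ => Q ϑ s ω) = fun ϑ =>
        (Ring.inverse ((1 : Matrix (S × O) (S × O) ℝ) - M ϑ) *ᵥ b) (s, ω) := by
      funext ϑ
      exact hQrepr ϑ (s, ω)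
    rw [this]
    let L : Matrix (S × O) (S × O) ℝ →ₗ[ℝ] ℝ :=
      { toFun := fun N => (N *ᵥ b) (s, ω)
        map_add' := fun N₁ N₂ => by simp [Matrix.add_mulVec]
        map_smul' := fun c N => by simp [Matrix.smul_mulVec] }
    have hL : Differentiable ℝ fun N : Matrix (S × O) (S × O) ℝ => (N *ᵥ b) (s, ω) :=
      (LinearMap.toContinuousLinearMap L).differentiable
    exact hL.comp hinvd
  refine ⟨hQd, ?_⟩
  intro ω s
  have : (fun ϑ => U ϑ ω s) = fun ϑ =>
      (1 - β ϑ ω s) * Q ϑ s ω + β ϑ ω s * ∑ ω', πΩ s ω' * Q ϑ s ω' := by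
    funext ϑ; exact hU ϑ ω s
  rw [this]
  apply Differentiable.add
  · exact ((differentiable_const (1 : ℝ)).sub (hβd ω s)).mul (hQd s ω)
  · exact (hβd ω s).mul (Differentiable.fun_sum fun ω' _ => (hQd s ω').const_mul _)
end
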